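/- arXiv:2007.06047 — 4 statements merged into one kernel-verified Lean document; each statement's English description precedes it below -/
import Mathlib

section
/- Let A = U − V be a convergent K-regular splitting of A ∈ ℝ^{n×n} and let U = F − G be a convergent K-weak regular splitting of type II such that V F⁻¹ G = G F⁻¹ V. Then for every sequence s : ℕ → ℕ with s(k) ≥ 1 for all k, every b ∈ ℝ^n and every initial vector x₀ ∈ ℝ^n, the non-stationary two-stage iteration x_{k+1} = T_{s(k)} x_k + Q_{s(k)} b converges to A⁻¹ b as k → ∞. -/
open Matrix Finset Filter
open scoped NNReal ENNReal Topology

/-- A proper cone in `ℝ^n`: a closed, pointed, solid convex cone. -/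
def IsProperCone {n : ℕ} (K : Set (Fin n → ℝ)) : Prop :=
  IsClosed K ∧ Convex ℝ K ∧ (∀ c : ℝ, 0 ≤ c → ∀ x ∈ K, c • x ∈ K) ∧
    K ∩ (-K) = {0} ∧ (interior K).Nonempty

/-- `M ≥_K 0`: the matrix `M` leaves the cone `K` invariant. -/
def KNonneg {n : ℕ} (K : Set (Fin n → ℝ)) (M : Matrix (Fin n) (Fin n) ℝ) : Prop :=
  ∀ x ∈ K, M.mulVec x ∈ K

/-- Spectral radius: the supremum of the moduli of the complex eigenvalues. -/
noncomputable def specRad {n : ℕ} (M : Matrix (Fin n) (Fin n) ℝ) : ℝ :=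
  sSup ((fun z : ℂ => ‖z‖) '' spectrum ℂ (M.map Complex.ofReal))

/-- `A = U - V` is a `K`-regular splitting. -/
def KRegularSplitting {n : ℕ} (K : Set (Fin n → ℝ))
    (A U V : Matrix (Fin n) (Fin n) ℝ) : Prop :=
  A = U - V ∧ IsUnit U ∧ KNonneg K U⁻¹ ∧ KNonneg K V

/-- `A = U - V` is a `K`-weak regular splitting of type I. -/
def KWeakRegularSplittingI {n : ℕ} (K : Set (Fin n → ℝ))
    (A U V : Matrix (Fin n) (Fin n) ℝ) : Prop :=
  A = U - V ∧ IsUnit U ∧ KNonneg K U⁻¹ ∧ KNonneg K (U⁻¹ * V)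

/-- `A = U - V` is a `K`-weak regular splitting of type II. -/
def KWeakRegularSplittingII {n : ℕ} (K : Set (Fin n → ℝ))
    (A U V : Matrix (Fin n) (Fin n) ℝ) : Prop :=
  A = U - V ∧ IsUnit U ∧ KNonneg K U⁻¹ ∧ KNonneg K (V * U⁻¹)

/-- `A` is `K`-monotone: invertible with `A⁻¹ ≥_K 0`. -/
def KMonotone {n : ℕ} (K : Set (Fin n → ℝ)) (A : Matrix (Fin n) (Fin n) ℝ) : Prop :=
  IsUnit A ∧ KNonneg K A⁻¹

/-- Two-stage iteration matrix `T_s = (F⁻¹G)^s + Σ_{j=0}^{s-1} (F⁻¹G)^j F⁻¹ V`. -/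
noncomputable def twoStageT {n : ℕ} (F G V : Matrix (Fin n) (Fin n) ℝ) (s : ℕ) :
    Matrix (Fin n) (Fin n) ℝ :=
  (F⁻¹ * G) ^ s + (∑ j ∈ Finset.range s, (F⁻¹ * G) ^ j) * (F⁻¹ * V)

/-- `T̂_s = (GF⁻¹)^s + Σ_{j=0}^{s-1} (GF⁻¹)^j V F⁻¹`. -/
noncomputable def twoStageThat {n : ℕ} (F G V : Matrix (Fin n) (Fin n) ℝ) (s : ℕ) :
    Matrix (Fin n) (Fin n) ℝ :=
  (G * F⁻¹) ^ s + (∑ j ∈ Finset.range s, (G * F⁻¹) ^ j) * (V * F⁻¹)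

/-- `Q_s = Σ_{j=0}^{s-1} (F⁻¹G)^j F⁻¹`. -/
noncomputable def twoStageQ {n : ℕ} (F G : Matrix (Fin n) (Fin n) ℝ) (s : ℕ) :
    Matrix (Fin n) (Fin n) ℝ :=
  (∑ j ∈ Finset.range s, (F⁻¹ * G) ^ j) * F⁻¹





attribute [local instance] Matrix.linftyOpNormedAddCommGroup Matrix.linftyOpNormedRing
  Matrix.linftyOpNormedAlgebra

section spec
variable {n : ℕ} (M : Matrix (Fin n) (Fin n) ℝ)

lemma norm_entry_le {x : Matrix (Fin n) (Fin n) ℂ} (i j : Fin n) : ‖x i j‖ ≤ ‖x‖ := by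
  have h1 := Matrix.linfty_opNorm_mulVec x (Pi.single j 1)
  rw [mulVec_single_one] at h1
  have h2 : ‖x i j‖ ≤ ‖xᵀ j‖ := norm_le_pi_norm (xᵀ j) i
  have h3 : ‖(Pi.single j (1:ℂ) : Fin n → ℂ)‖ = 1 := by
    rw [Pi.norm_single (G := fun _ : Fin n => ℂ) (1:ℂ)]; exact norm_one
  rw [h3, mul_one] at h1
  exact h2.trans h1

lemma specRad_bddAbove [Nonempty (Fin n)] :
    BddAbove ((fun z : ℂ => ‖z‖) '' spectrum ℂ (M.map Complex.ofReal)) := by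
  refine ⟨‖M.map Complex.ofReal‖, ?_⟩
  rintro _ ⟨z, hz, rfl⟩
  simpa using spectrum.norm_le_norm_of_mem (𝕜 := ℂ) hz

lemma isUnit_one_sub_of_specRad_lt_one (h : specRad M < 1) : IsUnit (1 - M) := by
  rcases Nat.eq_zero_or_pos n with hn | hn
  · subst hn
    refine (Matrix.isUnit_iff_isUnit_det _).2 ?_
    rw [Matrix.det_fin_zero]
    exact isUnit_one
  haveI : Nonempty (Fin n) := ⟨⟨0, hn⟩⟩
  by_contra hU
  have hdet : ¬ IsUnit (1 - M).det := fun hd => hU ((Matrix.isUnit_iff_isUnit_det _).2 hd)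
  have hdetC : ((1 : Matrix (Fin n) (Fin n) ℂ) - M.map Complex.ofReal).det = 0 := by
    have h1 : ((1 - M).map (Complex.ofRealHom)).det = Complex.ofRealHom (1 - M).det :=
      (RingHom.map_det Complex.ofRealHom (1 - M)).symm
    have h2 : (1 - M).det = 0 := by
      by_contra h0
      exact hdet (isUnit_iff_ne_zero.2 h0)
    have h3 : (1 - M).map Complex.ofRealHom
        = (1 : Matrix (Fin n) (Fin n) ℂ) - M.map Complex.ofReal := by
      ext i j
      simp [Matrix.map_apply, Matrix.one_apply, apply_ite]
    rw [← h3, h1, h2, map_zero]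
  have hmem : (1 : ℂ) ∈ spectrum ℂ (M.map Complex.ofReal) := by
    rw [spectrum.mem_iff]
    intro hu
    rw [Matrix.isUnit_iff_isUnit_det] at hu
    have heq : (algebraMap ℂ (Matrix (Fin n) (Fin n) ℂ)) 1 - M.map Complex.ofReal
        = 1 - M.map Complex.ofReal := by simp
    rw [heq, hdetC] at hu
    exact (isUnit_iff_ne_zero.1 hu) rfl
  have h1 : (1 : ℝ) ≤ specRad M := by
    have hmem' : (1:ℝ) ∈ (fun z : ℂ => ‖z‖) '' spectrum ℂ (M.map Complex.ofReal) :=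
      ⟨1, hmem, by simp⟩
    exact le_csSup (specRad_bddAbove M) hmem'
  linarith

lemma eventually_pow_entry_le (h : specRad M < 1) :
    ∃ r : ℝ, 0 ≤ r ∧ r < 1 ∧ ∀ i j, ∀ᶠ k in atTop, |(M ^ k) i j| ≤ r ^ k := by
  rcases Nat.eq_zero_or_pos n with hn | hn
  · exact ⟨0, le_refl 0, by norm_num, fun i => absurd i.2 (by omega)⟩
  haveI : Nonempty (Fin n) := ⟨⟨0, hn⟩⟩
  set a := M.map Complex.ofReal with ha
  have hsr : spectralRadius ℂ a < 1 := by
    have hle : spectralRadius ℂ a ≤ ENNReal.ofReal (specRad M) := by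
      rw [spectralRadius]
      refine iSup₂_le fun z hz => ?_
      rw [← ENNReal.ofReal_coe_nnreal, coe_nnnorm]
      refine ENNReal.ofReal_le_ofReal ?_
      exact le_csSup (specRad_bddAbove M) ⟨z, hz, by simp⟩
    exact lt_of_le_of_lt hle (by rw [ENNReal.ofReal_lt_one]; exact h)
  obtain ⟨r, hr1, hr2⟩ := ENNReal.lt_iff_exists_nnreal_btwn.1 hsr
  have hgel := spectrum.pow_nnnorm_pow_one_div_tendsto_nhds_spectralRadius a
  have hev : ∀ᶠ k : ℕ in atTop, (‖a ^ k‖₊ : ℝ≥0∞) ^ (1 / (k : ℝ)) < (r : ℝ≥0∞) :=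
    hgel.eventually_lt_const hr1
  have hr1' : (r : ℝ) < 1 := by exact_mod_cast hr2
  refine ⟨r, r.2, hr1', fun i j => ?_⟩
  filter_upwards [hev, eventually_ge_atTop 1] with k hk hk1
  have hkne : (1 / (k:ℝ)) * (k:ℝ) = 1 := by
    field_simp
  have hX : (‖a ^ k‖₊ : ℝ≥0∞) ≤ (r : ℝ≥0∞) ^ (k : ℝ) := by
    calc (‖a ^ k‖₊ : ℝ≥0∞) = ((‖a ^ k‖₊ : ℝ≥0∞) ^ (1/(k:ℝ))) ^ (k:ℝ) := by
          rw [← ENNReal.rpow_mul, hkne, ENNReal.rpow_one]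
      _ ≤ (r : ℝ≥0∞) ^ (k : ℝ) := ENNReal.rpow_le_rpow hk.le (by positivity)
  rw [ENNReal.rpow_natCast, ← ENNReal.coe_pow, ENNReal.coe_le_coe] at hX
  have hnorm : ‖a ^ k‖ ≤ (r : ℝ) ^ k := by
    have := NNReal.coe_le_coe.2 hX
    rw [coe_nnnorm] at this
    simpa using this
  have hentry : |(M ^ k) i j| ≤ ‖a ^ k‖ := by
    have hmap : a ^ k = (M ^ k).map Complex.ofReal := by
      rw [ha]
      have : M.map Complex.ofReal = Complex.ofRealHom.mapMatrix M := rfl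
      rw [this, ← map_pow]
      rfl
    have h2 : ‖(a ^ k) i j‖ ≤ ‖a ^ k‖ := norm_entry_le i j
    rw [hmap] at h2
    rw [hmap]
    simpa [Matrix.map_apply, Complex.norm_real, Real.norm_eq_abs] using h2
  exact hentry.trans hnorm

end spec

section specC
variable {n : ℕ} (M : Matrix (Fin n) (Fin n) ℝ)
lemma pow_mulVec_tendsto_zero (h : specRad M < 1) (v : Fin n → ℝ) :
    Tendsto (fun k => (M ^ k) *ᵥ v) atTop (𝓝 0) := by
  obtain ⟨r, hr0, hr1, hev⟩ := eventually_pow_entry_le M h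
  rw [tendsto_pi_nhds]
  intro i
  have hrw : ∀ k, ((M ^ k) *ᵥ v) i = ∑ j, (M ^ k) i j * v j := fun _ => rfl
  simp only [hrw, Pi.zero_apply]
  have hevall : ∀ᶠ k in atTop, ∀ j, |(M ^ k) i j| ≤ r ^ k := eventually_all.2 (fun j => hev i j)
  apply squeeze_zero_norm' (a := fun k => (∑ j, |v j|) * r ^ k)
  · filter_upwards [hevall] with k hk
    calc ‖∑ j, (M ^ k) i j * v j‖ ≤ ∑ j, |(M ^ k) i j * v j| := by
          rw [Real.norm_eq_abs]; exact Finset.abs_sum_le_sum_abs _ _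
      _ ≤ ∑ j, r ^ k * |v j| := by
          refine Finset.sum_le_sum fun j _ => ?_
          rw [abs_mul]
          exact mul_le_mul_of_nonneg_right (hk j) (abs_nonneg _)
      _ = (∑ j, |v j|) * r ^ k := by rw [← Finset.mul_sum, mul_comm]
  · have h1 : Tendsto (fun k : ℕ => r ^ k) atTop (𝓝 0) :=
      tendsto_pow_atTop_nhds_zero_of_lt_one hr0 hr1
    have := h1.const_mul (∑ j, |v j|)
    simpa using this

end specC





section aux
variable {n : ℕ} {K : Set (Fin n → ℝ)}

lemma KNonneg_mul {M N : Matrix (Fin n) (Fin n) ℝ} (hM : KNonneg K M) (hN : KNonneg K N) :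
    KNonneg K (M * N) := by
  intro x hx
  rw [← Matrix.mulVec_mulVec]
  exact hM _ (hN _ hx)

lemma KNonneg_pow {M : Matrix (Fin n) (Fin n) ℝ} (hM : KNonneg K M) (m : ℕ) :
    KNonneg K (M ^ m) := by
  induction m with
  | zero => intro x hx; simpa [pow_zero, Matrix.one_mulVec] using hx
  | succ m ih => rw [pow_succ]; exact KNonneg_mul ih hM

lemma sumK (hadd : ∀ x ∈ K, ∀ y ∈ K, x + y ∈ K) (h0 : (0 : Fin n → ℝ) ∈ K)
    (f : ℕ → Fin n → ℝ) (hf : ∀ j, f j ∈ K) (m : ℕ) : ∑ j ∈ Finset.range m, f j ∈ K := by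
  induction m with
  | zero => simpa using h0
  | succ m ih => rw [Finset.sum_range_succ]; exact hadd _ ih _ (hf m)

lemma geom_sum_one_sub {R : Type*} [Ring R] (x : R) (m : ℕ) :
    (∑ j ∈ Finset.range m, x ^ j) * (1 - x) = 1 - x ^ m := by
  have h := geom_sum_mul x m
  have h2 : (∑ j ∈ Finset.range m, x ^ j) * (1 - x)
      = -((∑ j ∈ Finset.range m, x ^ j) * (x - 1)) := by noncomm_ring
  rw [h2, h]; noncomm_ring

lemma key_identity (Hh R P N : Matrix (Fin n) (Fin n) ℝ)
    (hP : (1 - Hh) * P = 1) (hN : (1 - R * P) * N = 1) (m : ℕ) :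
    (1 - (Hh ^ m + (∑ j ∈ Finset.range m, Hh ^ j) * R)) * (P * N)
      = ∑ j ∈ Finset.range m, Hh ^ j := by
  set Gs := ∑ j ∈ Finset.range m, Hh ^ j with hGs
  have hg : Gs * (1 - Hh) = 1 - Hh ^ m := geom_sum_one_sub Hh m
  calc (1 - (Hh ^ m + Gs * R)) * (P * N)
      = (Gs * (1 - Hh)) * (P * N) - Gs * (R * (P * N)) := by rw [hg]; noncomm_ring
    _ = Gs * (((1 - Hh) * P) * N) - Gs * ((R * P) * N) := by noncomm_ring
    _ = Gs * ((1 : Matrix (Fin n) (Fin n) ℝ) * N) - Gs * ((R * P) * N) := by rw [hP]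
    _ = Gs * ((1 - R * P) * N) := by noncomm_ring
    _ = Gs * 1 := by rw [hN]
    _ = Gs := by rw [mul_one]

lemma conjPowEq {F Fi M : Matrix (Fin n) (Fin n) ℝ} (hFi : Fi * F = 1) (hF : F * Fi = 1) :
    ∀ m : ℕ, (F * M * Fi) ^ m = F * M ^ m * Fi := by
  intro m
  induction m with
  | zero => rw [pow_zero, pow_zero, Matrix.mul_one, hF]
  | succ m ih =>
    rw [pow_succ, pow_succ, ih]
    calc F * M ^ m * Fi * (F * M * Fi) = F * M ^ m * ((Fi * F) * (M * Fi)) := by noncomm_ring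
      _ = F * M ^ m * ((1 : Matrix (Fin n) (Fin n) ℝ) * (M * Fi)) := by rw [hFi]
      _ = F * (M ^ m * M) * Fi := by noncomm_ring

lemma tendsto_mulVec (B : Matrix (Fin n) (Fin n) ℝ) {y : ℕ → Fin n → ℝ} {l : Fin n → ℝ}
    (h : Tendsto y atTop (𝓝 l)) : Tendsto (fun k => B *ᵥ (y k)) atTop (𝓝 (B *ᵥ l)) := by
  rw [tendsto_pi_nhds] at h ⊢
  intro i
  have hrw : ∀ k, (B *ᵥ y k) i = ∑ j, B i j * y k j := fun _ => rfl
  have hrw2 : (B *ᵥ l) i = ∑ j, B i j * l j := rfl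
  simp only [hrw, hrw2]
  exact tendsto_finset_sum _ (fun j _ => (h j).const_mul _)

lemma mem_interior_add (hadd : ∀ x ∈ K, ∀ y ∈ K, x + y ∈ K)
    {a y : Fin n → ℝ} (ha : a ∈ interior K) (hy : y ∈ K) : a + y ∈ interior K := by
  have hmap : (fun z => z + y) '' interior K ⊆ K := by
    rintro _ ⟨z, hz, rfl⟩
    exact hadd _ (interior_subset hz) _ hy
  have hopen : IsOpen ((fun z => z + y) '' interior K) :=
    (isOpenMap_add_right y) _ isOpen_interior
  exact interior_maximal hmap hopen ⟨a, ha, rfl⟩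

lemma neumann_nonneg (hclosed : IsClosed K)
    (hadd : ∀ x ∈ K, ∀ y ∈ K, x + y ∈ K) (h0 : (0 : Fin n → ℝ) ∈ K)
    (X P : Matrix (Fin n) (Fin n) ℝ) (hX : KNonneg K X)
    (hXP : (1 - X) * P = 1)
    (htend : ∀ u : Fin n → ℝ, Tendsto (fun m => (X ^ m) *ᵥ u) atTop (𝓝 0))
    {z : Fin n → ℝ} (hz : z ∈ K) : P *ᵥ z ∈ K ∧ P *ᵥ z - z ∈ K := by
  have hsum : ∀ m, (∑ j ∈ Finset.range m, X ^ j) = (1 - X ^ m) * P := by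
    intro m
    calc (∑ j ∈ Finset.range m, X ^ j)
        = (∑ j ∈ Finset.range m, X ^ j) * ((1 - X) * P) := by rw [hXP, mul_one]
      _ = ((∑ j ∈ Finset.range m, X ^ j) * (1 - X)) * P := by rw [Matrix.mul_assoc]
      _ = (1 - X ^ m) * P := by rw [geom_sum_one_sub]
  have hpartial : ∀ m, ∑ j ∈ Finset.range m, (X ^ j) *ᵥ z
      = P *ᵥ z - (X ^ m) *ᵥ (P *ᵥ z) := by
    intro m
    have h1 : (∑ j ∈ Finset.range m, X ^ j) *ᵥ z = ∑ j ∈ Finset.range m, (X ^ j) *ᵥ z :=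
      map_sum (Matrix.mulVec.addMonoidHomLeft z) _ _
    rw [← h1, hsum m, ← Matrix.mulVec_mulVec, Matrix.sub_mulVec, Matrix.one_mulVec]
  have hmemm : ∀ m, ∑ j ∈ Finset.range m, (X ^ j) *ᵥ z ∈ K :=
    sumK hadd h0 _ (fun j => KNonneg_pow hX j z hz)
  have htend1 : Tendsto (fun m => ∑ j ∈ Finset.range m, (X ^ j) *ᵥ z) atTop (𝓝 (P *ᵥ z)) := by
    simp only [hpartial]
    have h2 : Tendsto (fun m => P *ᵥ z - (X ^ m) *ᵥ (P *ᵥ z)) atTop (𝓝 (P *ᵥ z - 0)) :=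
      tendsto_const_nhds.sub (htend (P *ᵥ z))
    simpa using h2
  refine ⟨hclosed.mem_of_tendsto htend1 (Filter.Eventually.of_forall hmemm), ?_⟩
  have hmem2 : ∀ m, (∑ j ∈ Finset.range (m + 1), (X ^ j) *ᵥ z) - z ∈ K := by
    intro m
    rw [Finset.sum_range_succ']
    simp only [pow_zero, Matrix.one_mulVec]
    rw [add_sub_cancel_right]
    exact sumK hadd h0 _ (fun j => KNonneg_pow hX (j + 1) z hz) m
  have htend2 : Tendsto (fun m => (∑ j ∈ Finset.range (m + 1), (X ^ j) *ᵥ z) - z)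
      atTop (𝓝 (P *ᵥ z - z)) := by
    have hshift : Tendsto (fun m : ℕ => m + 1) atTop atTop := tendsto_add_atTop_nat 1
    exact (htend1.comp hshift).sub_const z
  exact hclosed.mem_of_tendsto htend2 (Filter.Eventually.of_forall hmem2)

lemma interval_bound (hclosed : IsClosed K)
    (hsmul : ∀ c : ℝ, 0 ≤ c → ∀ x ∈ K, c • x ∈ K)
    (hpointed : K ∩ (-K) = {0}) (w : Fin n → ℝ) :
    ∃ B : ℝ, 0 ≤ B ∧ ∀ y : Fin n → ℝ, w - y ∈ K → w + y ∈ K → ‖y‖ ≤ B := by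
  by_contra hcon
  push_neg at hcon
  have hseq : ∀ m : ℕ, ∃ y : Fin n → ℝ, (w - y ∈ K ∧ w + y ∈ K) ∧ (m : ℝ) < ‖y‖ := by
    intro m
    obtain ⟨y, h1, h2, h3⟩ := hcon m (Nat.cast_nonneg m)
    exact ⟨y, ⟨h1, h2⟩, h3⟩
  choose y hy hnorm using hseq
  have hypos : ∀ m, 0 < ‖y m‖ := fun m => lt_of_le_of_lt (Nat.cast_nonneg m) (hnorm m)
  have husph : ∀ m, (‖y m‖⁻¹ • y m) ∈ Metric.sphere (0 : Fin n → ℝ) 1 := by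
    intro m
    simp [norm_smul, abs_of_pos (inv_pos.2 (hypos m)), inv_mul_cancel₀ (hypos m).ne']
  obtain ⟨d, hd, φ, hφ, hconv⟩ :=
    (isCompact_sphere (0 : Fin n → ℝ) 1).tendsto_subseq husph
  simp only [Function.comp_def] at hconv
  have hinv0 : Tendsto (fun m => ‖y (φ m)‖⁻¹) atTop (𝓝 0) := by
    refine Tendsto.inv_tendsto_atTop ?_
    refine tendsto_atTop_mono (fun m => ?_) tendsto_natCast_atTop_atTop
    exact le_trans (Nat.cast_le.2 hφ.le_apply) (hnorm (φ m)).le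
  have hdK : d ∈ K := by
    have h1 : Tendsto (fun m => ‖y (φ m)‖⁻¹ • w + ‖y (φ m)‖⁻¹ • y (φ m)) atTop
        (𝓝 ((0 : ℝ) • w + d)) := (hinv0.smul_const w).add hconv
    have h2 : (fun m => ‖y (φ m)‖⁻¹ • w + ‖y (φ m)‖⁻¹ • y (φ m))
        = fun m => ‖y (φ m)‖⁻¹ • (w + y (φ m)) := by
      funext m; rw [smul_add]
    rw [h2, zero_smul, zero_add] at h1
    exact hclosed.mem_of_tendsto h1 (Filter.Eventually.of_forall
      (fun m => hsmul _ (inv_nonneg.2 (norm_nonneg _)) _ (hy (φ m)).2))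
  have hdK' : -d ∈ K := by
    have h1 : Tendsto (fun m => ‖y (φ m)‖⁻¹ • w - ‖y (φ m)‖⁻¹ • y (φ m)) atTop
        (𝓝 ((0 : ℝ) • w - d)) := (hinv0.smul_const w).sub hconv
    have h2 : (fun m => ‖y (φ m)‖⁻¹ • w - ‖y (φ m)‖⁻¹ • y (φ m))
        = fun m => ‖y (φ m)‖⁻¹ • (w - y (φ m)) := by
      funext m; rw [smul_sub]
    rw [h2, zero_smul, zero_sub] at h1
    exact hclosed.mem_of_tendsto h1 (Filter.Eventually.of_forall
      (fun m => hsmul _ (inv_nonneg.2 (norm_nonneg _)) _ (hy (φ m)).1))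
  have hd0 : d = 0 := by
    have hdmem : d ∈ K ∩ (-K) := ⟨hdK, by simpa [Set.mem_neg] using hdK'⟩
    rw [hpointed] at hdmem
    exact hdmem
  have hd1 : ‖d‖ = 1 := by simpa using hd
  rw [hd0] at hd1
  simp at hd1

end aux

set_option maxHeartbeats 1600000 in
theorem stmt_8 {n : ℕ} (K : Set (Fin n → ℝ)) (hK : IsProperCone K)
    (A U V F G : Matrix (Fin n) (Fin n) ℝ)
    (houter : KRegularSplitting K A U V) (houterconv : specRad (U⁻¹ * V) < 1)
    (hinner : KWeakRegularSplittingII K U F G) (hinnerconv : specRad (F⁻¹ * G) < 1)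
    (hcomm : V * F⁻¹ * G = G * F⁻¹ * V) :
    ∀ s : ℕ → ℕ, (∀ k, 1 ≤ s k) → ∀ b x₀ : Fin n → ℝ, ∀ x : ℕ → Fin n → ℝ,
      x 0 = x₀ →
      (∀ k, x (k + 1) =
        (twoStageT F G V (s k)).mulVec (x k) + (twoStageQ F G (s k)).mulVec b) →
      Filter.Tendsto x Filter.atTop (nhds (A⁻¹.mulVec b)) := by
  intro s hs b x₀ x hx0 hxrec
  obtain ⟨hKclosed, hKconv, hKsmul, hKpointed, hKint⟩ := hK
  obtain ⟨hAeq, hUunit, hUinv, hVnn⟩ := houter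
  obtain ⟨hUeq, hFunit, hFinv, hGFnn⟩ := hinner
  -- basic cone facts
  have h0K : (0 : Fin n → ℝ) ∈ K := by
    have h1 : (0 : Fin n → ℝ) ∈ K ∩ (-K) := by rw [hKpointed]; exact Set.mem_singleton 0
    exact h1.1
  have hadd : ∀ x ∈ K, ∀ y ∈ K, x + y ∈ K := by
    intro a ha c hc
    have h1 := hKconv ha hc (by norm_num : (0:ℝ) ≤ (1/2:ℝ))
      (by norm_num : (0:ℝ) ≤ (1/2:ℝ)) (by norm_num)
    have h2 := hKsmul 2 (by norm_num) _ h1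
    have h3 : (2:ℝ) • ((1/2 : ℝ) • a + (1/2 : ℝ) • c) = a + c := by
      rw [smul_add, smul_smul, smul_smul]; norm_num
    rwa [h3] at h2
  -- invertibility
  have hUdet : IsUnit U.det := (Matrix.isUnit_iff_isUnit_det U).1 hUunit
  have hUUi : U * U⁻¹ = 1 := Matrix.mul_nonsing_inv U hUdet
  have hUiU : U⁻¹ * U = 1 := Matrix.nonsing_inv_mul U hUdet
  have hFdet : IsUnit F.det := (Matrix.isUnit_iff_isUnit_det F).1 hFunit
  have hFFi : F * F⁻¹ = 1 := Matrix.mul_nonsing_inv F hFdet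
  have hFiF : F⁻¹ * F = 1 := Matrix.nonsing_inv_mul F hFdet
  have hT0unit : IsUnit (1 - U⁻¹ * V) := isUnit_one_sub_of_specRad_lt_one _ houterconv
  have hA2 : A = U * (1 - U⁻¹ * V) := by
    have h1 : U * (1 - U⁻¹ * V) = U - (U * U⁻¹) * V := by noncomm_ring
    rw [h1, hUUi, Matrix.one_mul, ← hAeq]
  have hAunit : IsUnit A := by rw [hA2]; exact hUunit.mul hT0unit
  have hAdet : IsUnit A.det := (Matrix.isUnit_iff_isUnit_det A).1 hAunit
  have hAAi : A * A⁻¹ = 1 := Matrix.mul_nonsing_inv A hAdet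
  -- inverse identities
  have hPl : (1 - G * F⁻¹) * (F * U⁻¹) = 1 := by
    have h1 : (1 - G * F⁻¹) * (F * U⁻¹) = F * U⁻¹ - G * ((F⁻¹ * F) * U⁻¹) := by noncomm_ring
    rw [h1, hFiF, Matrix.one_mul]
    calc F * U⁻¹ - G * U⁻¹ = (F - G) * U⁻¹ := by noncomm_ring
      _ = U * U⁻¹ := by rw [← hUeq]
      _ = 1 := hUUi
  have hSRP : (V * F⁻¹) * (F * U⁻¹) = V * U⁻¹ := by
    have h1 : (V * F⁻¹) * (F * U⁻¹) = V * ((F⁻¹ * F) * U⁻¹) := by noncomm_ring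
    rw [h1, hFiF, Matrix.one_mul]
  have hNl : (1 - V * U⁻¹) * (U * A⁻¹) = 1 := by
    have h1 : (1 - V * U⁻¹) * (U * A⁻¹) = U * A⁻¹ - V * ((U⁻¹ * U) * A⁻¹) := by noncomm_ring
    rw [h1, hUiU, Matrix.one_mul]
    calc U * A⁻¹ - V * A⁻¹ = (U - V) * A⁻¹ := by noncomm_ring
      _ = A * A⁻¹ := by rw [← hAeq]
      _ = 1 := hAAi
  -- conjugation forms
  have hHhconj : G * F⁻¹ = F * (F⁻¹ * G) * F⁻¹ := by
    rw [← Matrix.mul_assoc, hFFi, Matrix.one_mul]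
  have hSconj : V * U⁻¹ = U * (U⁻¹ * V) * U⁻¹ := by
    rw [← Matrix.mul_assoc, hUUi, Matrix.one_mul]
  have htendHh : ∀ u : Fin n → ℝ,
      Filter.Tendsto (fun m => ((G * F⁻¹) ^ m) *ᵥ u) Filter.atTop (nhds 0) := by
    intro u
    have hrw : ∀ m : ℕ, ((G * F⁻¹) ^ m) *ᵥ u = F *ᵥ (((F⁻¹ * G) ^ m) *ᵥ (F⁻¹ *ᵥ u)) := by
      intro m
      rw [hHhconj, conjPowEq hFiF hFFi, Matrix.mulVec_mulVec, Matrix.mulVec_mulVec,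
        Matrix.mul_assoc]
    simp only [hrw]
    have h1 := tendsto_mulVec F (pow_mulVec_tendsto_zero _ hinnerconv (F⁻¹ *ᵥ u))
    simpa [Matrix.mulVec_zero] using h1
  have htendS : ∀ u : Fin n → ℝ,
      Filter.Tendsto (fun m => ((V * U⁻¹) ^ m) *ᵥ u) Filter.atTop (nhds 0) := by
    intro u
    have hrw : ∀ m : ℕ, ((V * U⁻¹) ^ m) *ᵥ u = U *ᵥ (((U⁻¹ * V) ^ m) *ᵥ (U⁻¹ *ᵥ u)) := by
      intro m
      rw [hSconj, conjPowEq hUiU hUUi, Matrix.mulVec_mulVec, Matrix.mulVec_mulVec,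
        Matrix.mul_assoc]
    simp only [hrw]
    have h1 := tendsto_mulVec U (pow_mulVec_tendsto_zero _ houterconv (U⁻¹ *ᵥ u))
    simpa [Matrix.mulVec_zero] using h1
  -- K-nonnegativity
  have hRnn : KNonneg K (V * F⁻¹) := KNonneg_mul hVnn hFinv
  have hPneumann : ∀ {z : Fin n → ℝ}, z ∈ K →
      (F * U⁻¹) *ᵥ z ∈ K ∧ (F * U⁻¹) *ᵥ z - z ∈ K :=
    fun {z} hz => neumann_nonneg hKclosed hadd h0K (G * F⁻¹) (F * U⁻¹) hGFnn hPl htendHh hz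
  have hPnn : KNonneg K (F * U⁻¹) := fun z hz => (hPneumann hz).1
  have hSnn : KNonneg K (V * U⁻¹) := by rw [← hSRP]; exact KNonneg_mul hRnn hPnn
  have hNneumann : ∀ {z : Fin n → ℝ}, z ∈ K →
      (U * A⁻¹) *ᵥ z ∈ K ∧ (U * A⁻¹) *ᵥ z - z ∈ K :=
    fun {z} hz => neumann_nonneg hKclosed hadd h0K (V * U⁻¹) (U * A⁻¹) hSnn hNl htendS hz
  -- T-hat is K-nonnegative
  have hThatnn : ∀ m, KNonneg K (twoStageThat F G V m) := by
    intro m v hv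
    show (twoStageThat F G V m) *ᵥ v ∈ K
    simp only [twoStageThat]
    rw [Matrix.add_mulVec, ← Matrix.mulVec_mulVec]
    refine hadd _ (KNonneg_pow hGFnn m v hv) _ ?_
    have h1 : (∑ j ∈ Finset.range m, (G * F⁻¹) ^ j) *ᵥ ((V * F⁻¹) *ᵥ v)
        = ∑ j ∈ Finset.range m, ((G * F⁻¹) ^ j) *ᵥ ((V * F⁻¹) *ᵥ v) :=
      map_sum (Matrix.mulVec.addMonoidHomLeft ((V * F⁻¹) *ᵥ v)) (fun j => (G * F⁻¹) ^ j)
        (Finset.range m)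
    rw [h1]
    exact sumK hadd h0K _ (fun j => KNonneg_pow hGFnn j _ (hRnn v hv)) m
  -- key identity
  have hkey : ∀ m, (1 - twoStageThat F G V m) * ((F * U⁻¹) * (U * A⁻¹))
      = ∑ j ∈ Finset.range m, (G * F⁻¹) ^ j := by
    intro m
    have h1 := key_identity (G * F⁻¹) (V * F⁻¹) (F * U⁻¹) (U * A⁻¹) hPl
      (by rw [hSRP]; exact hNl) m
    simpa [twoStageThat] using h1
  -- fixed point
  have hTQ : ∀ m, twoStageT F G V m + twoStageQ F G m * A = 1 := by
    intro m
    have hFU : F⁻¹ * U = 1 - F⁻¹ * G := by rw [hUeq, Matrix.mul_sub, hFiF]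
    have hg : (∑ j ∈ Finset.range m, (F⁻¹ * G) ^ j) * (F⁻¹ * U) = 1 - (F⁻¹ * G) ^ m := by
      rw [hFU]; exact geom_sum_one_sub _ m
    simp only [twoStageT, twoStageQ]
    calc (F⁻¹ * G) ^ m + (∑ j ∈ Finset.range m, (F⁻¹ * G) ^ j) * (F⁻¹ * V)
          + ((∑ j ∈ Finset.range m, (F⁻¹ * G) ^ j) * F⁻¹) * A
        = (F⁻¹ * G) ^ m + (∑ j ∈ Finset.range m, (F⁻¹ * G) ^ j) * (F⁻¹ * U) := by
          rw [hAeq]; noncomm_ring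
      _ = (F⁻¹ * G) ^ m + (1 - (F⁻¹ * G) ^ m) := by rw [hg]
      _ = 1 := by noncomm_ring
  have hfix : ∀ m, (twoStageT F G V m) *ᵥ (A⁻¹ *ᵥ b) + (twoStageQ F G m) *ᵥ b
      = A⁻¹ *ᵥ b := by
    intro m
    have hb : A *ᵥ (A⁻¹ *ᵥ b) = b := by
      rw [Matrix.mulVec_mulVec, hAAi, Matrix.one_mulVec]
    have h7 : (twoStageT F G V m + twoStageQ F G m * A) *ᵥ (A⁻¹ *ᵥ b) = A⁻¹ *ᵥ b := by
      rw [hTQ m, Matrix.one_mulVec]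
    rw [Matrix.add_mulVec, ← Matrix.mulVec_mulVec, hb] at h7
    exact h7
  -- error recursion
  have herec : ∀ k, x (k + 1) - A⁻¹ *ᵥ b
      = (twoStageT F G V (s k)) *ᵥ (x k - A⁻¹ *ᵥ b) := by
    intro k
    have h1 := hfix (s k)
    calc x (k + 1) - A⁻¹ *ᵥ b
        = ((twoStageT F G V (s k)) *ᵥ x k + (twoStageQ F G (s k)) *ᵥ b)
          - ((twoStageT F G V (s k)) *ᵥ (A⁻¹ *ᵥ b) + (twoStageQ F G (s k)) *ᵥ b) := by
          rw [hxrec k, h1]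
      _ = (twoStageT F G V (s k)) *ᵥ (x k - A⁻¹ *ᵥ b) := by
          rw [Matrix.mulVec_sub]; abel
  -- conjugated recursion
  have hcommFH : ∀ j : ℕ, F * (F⁻¹ * G) ^ j = (G * F⁻¹) ^ j * F := by
    intro j
    rw [hHhconj, conjPowEq hFiF hFFi,
      Matrix.mul_assoc (F * (F⁻¹ * G) ^ j) F⁻¹ F, hFiF, Matrix.mul_one]
  have hFT : ∀ m, F * twoStageT F G V m = twoStageThat F G V m * F := by
    intro m
    simp only [twoStageT, twoStageThat]
    rw [Matrix.mul_add, Matrix.add_mul]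
    congr 1
    · exact hcommFH m
    · have h1 : F * ((∑ j ∈ Finset.range m, (F⁻¹ * G) ^ j) * (F⁻¹ * V))
          = (F * (∑ j ∈ Finset.range m, (F⁻¹ * G) ^ j)) * (F⁻¹ * V) := by
        rw [Matrix.mul_assoc]
      have h2 : F * (∑ j ∈ Finset.range m, (F⁻¹ * G) ^ j)
          = (∑ j ∈ Finset.range m, (G * F⁻¹) ^ j) * F := by
        rw [Finset.mul_sum, Finset.sum_mul]
        exact Finset.sum_congr rfl (fun j _ => hcommFH j)
      rw [h1, h2, Matrix.mul_assoc, Matrix.mul_assoc]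
      congr 1
      rw [← Matrix.mul_assoc, hFFi, Matrix.one_mul, Matrix.mul_assoc, hFiF, Matrix.mul_one]
  have hehrec : ∀ k, F *ᵥ (x (k + 1) - A⁻¹ *ᵥ b)
      = (twoStageThat F G V (s k)) *ᵥ (F *ᵥ (x k - A⁻¹ *ᵥ b)) := by
    intro k
    rw [herec k, Matrix.mulVec_mulVec, hFT (s k), ← Matrix.mulVec_mulVec]
  -- interior construction
  obtain ⟨e, he⟩ := hKint
  have heK : e ∈ K := interior_subset he
  have hNe := hNneumann heK
  set w : Fin n → ℝ := (F * U⁻¹) *ᵥ ((U * A⁻¹) *ᵥ e) with hwdef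
  have hw1 := hPneumann hNe.1
  have hweK : w - e ∈ K := by
    have h1 := hadd _ hw1.2 _ hNe.2
    rwa [sub_add_sub_cancel] at h1
  have hwint : w ∈ interior K := by
    have h1 := mem_interior_add hadd he hweK
    have h2 : e + (w - e) = w := by abel
    rwa [h2] at h1
  have hwkey : ∀ m, w - (twoStageThat F G V m) *ᵥ w
      = (∑ j ∈ Finset.range m, (G * F⁻¹) ^ j) *ᵥ e := by
    intro m
    calc w - (twoStageThat F G V m) *ᵥ w
        = (1 - twoStageThat F G V m) *ᵥ w := by
          rw [Matrix.sub_mulVec, Matrix.one_mulVec]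
      _ = ((1 - twoStageThat F G V m) * ((F * U⁻¹) * (U * A⁻¹))) *ᵥ e := by
          rw [hwdef, Matrix.mulVec_mulVec, Matrix.mulVec_mulVec, Matrix.mul_assoc]
      _ = (∑ j ∈ Finset.range m, (G * F⁻¹) ^ j) *ᵥ e := by rw [hkey m]
  -- choose δ
  have hδex : ∃ δ : ℝ, 0 < δ ∧ δ < 1 ∧ e - δ • w ∈ K := by
    have hc : Continuous fun δ : ℝ => e - δ • w :=
      continuous_const.sub (continuous_id.smul continuous_const)
    have ht : Filter.Tendsto (fun δ : ℝ => e - δ • w) (𝓝[>] (0:ℝ)) (nhds e) := by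
      have h1 := hc.tendsto 0
      simp only [zero_smul, sub_zero] at h1
      exact h1.mono_left nhdsWithin_le_nhds
    have hev1 : ∀ᶠ δ in 𝓝[>] (0:ℝ), e - δ • w ∈ K :=
      ht (mem_interior_iff_mem_nhds.1 he)
    have hev2 : ∀ᶠ δ in 𝓝[>] (0:ℝ), δ ∈ Set.Ioo (0:ℝ) 1 :=
      Ioo_mem_nhdsGT_of_mem ⟨le_refl 0, by norm_num⟩
    obtain ⟨δ, hδK, hδIoo⟩ := (hev1.and hev2).exists
    exact ⟨δ, hδIoo.1, hδIoo.2, hδK⟩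
  -- choose t
  have htex : ∃ t : ℝ, 0 < t ∧ t • w - F *ᵥ (x 0 - A⁻¹ *ᵥ b) ∈ K
      ∧ t • w + F *ᵥ (x 0 - A⁻¹ *ᵥ b) ∈ K := by
    set v0 : Fin n → ℝ := F *ᵥ (x 0 - A⁻¹ *ᵥ b) with hv0
    have hc1 : Continuous fun σ : ℝ => w - σ • v0 :=
      continuous_const.sub (continuous_id.smul continuous_const)
    have hc2 : Continuous fun σ : ℝ => w + σ • v0 :=
      continuous_const.add (continuous_id.smul continuous_const)
    have ht1 : Filter.Tendsto (fun σ : ℝ => w - σ • v0) (𝓝[>] (0:ℝ)) (nhds w) := by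
      have h1 := hc1.tendsto 0
      simp only [zero_smul, sub_zero] at h1
      exact h1.mono_left nhdsWithin_le_nhds
    have ht2 : Filter.Tendsto (fun σ : ℝ => w + σ • v0) (𝓝[>] (0:ℝ)) (nhds w) := by
      have h1 := hc2.tendsto 0
      simp only [zero_smul, add_zero] at h1
      exact h1.mono_left nhdsWithin_le_nhds
    have hev1 : ∀ᶠ σ in 𝓝[>] (0:ℝ), w - σ • v0 ∈ K :=
      ht1 (mem_interior_iff_mem_nhds.1 hwint)
    have hev2 : ∀ᶠ σ in 𝓝[>] (0:ℝ), w + σ • v0 ∈ K :=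
      ht2 (mem_interior_iff_mem_nhds.1 hwint)
    have hev3 : ∀ᶠ σ in 𝓝[>] (0:ℝ), σ ∈ Set.Ioi (0:ℝ) := self_mem_nhdsWithin
    obtain ⟨σ, hσa, hσb⟩ := ((hev1.and hev2).and hev3).exists
    obtain ⟨hσ1, hσ2⟩ := hσa
    have hσ3 : (0:ℝ) < σ := hσb
    refine ⟨σ⁻¹, inv_pos.2 hσ3, ?_, ?_⟩
    · have h1 := hKsmul σ⁻¹ (inv_pos.2 hσ3).le _ hσ1
      rwa [smul_sub, smul_smul, inv_mul_cancel₀ (ne_of_gt hσ3), one_smul] at h1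
    · have h1 := hKsmul σ⁻¹ (inv_pos.2 hσ3).le _ hσ2
      rwa [smul_add, smul_smul, inv_mul_cancel₀ (ne_of_gt hσ3), one_smul] at h1
  obtain ⟨δ, hδ0, hδ1, hδK⟩ := hδex
  obtain ⟨t, ht0, htm, htp⟩ := htex
  have hθ0 : (0:ℝ) < 1 - δ := by linarith
  have hθ1 : 1 - δ < 1 := by linarith
  -- uniform contraction on w
  have hTw : ∀ m, 1 ≤ m → (1 - δ) • w - (twoStageThat F G V m) *ᵥ w ∈ K := by
    intro m hm
    obtain ⟨m', rfl⟩ : ∃ m', m = m' + 1 := ⟨m - 1, by omega⟩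
    have h1 : (∑ j ∈ Finset.range (m' + 1), (G * F⁻¹) ^ j) *ᵥ e - e ∈ K := by
      have hs1 : (∑ j ∈ Finset.range (m' + 1), (G * F⁻¹) ^ j) *ᵥ e
          = ∑ j ∈ Finset.range (m' + 1), ((G * F⁻¹) ^ j) *ᵥ e :=
        map_sum (Matrix.mulVec.addMonoidHomLeft e) _ _
      rw [hs1, Finset.sum_range_succ']
      simp only [pow_zero, Matrix.one_mulVec]
      rw [add_sub_cancel_right]
      exact sumK hadd h0K _ (fun j => KNonneg_pow hGFnn (j + 1) e heK) m'
    have h2 : (1 - δ) • w - (twoStageThat F G V (m' + 1)) *ᵥ w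
        = ((∑ j ∈ Finset.range (m' + 1), (G * F⁻¹) ^ j) *ᵥ e - e) + (e - δ • w) := by
      rw [← hwkey (m' + 1)]
      module
    rw [h2]
    exact hadd _ h1 _ hδK
  -- main induction
  have hmain : ∀ k, (t * (1 - δ) ^ k) • w - F *ᵥ (x k - A⁻¹ *ᵥ b) ∈ K
      ∧ (t * (1 - δ) ^ k) • w + F *ᵥ (x k - A⁻¹ *ᵥ b) ∈ K := by
    intro k
    induction k with
    | zero =>
      refine ⟨?_, ?_⟩
      · simpa [pow_zero, mul_one] using htm
      · simpa [pow_zero, mul_one] using htp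
    | succ k ih =>
      have hc : (0:ℝ) ≤ t * (1 - δ) ^ k := by positivity
      have hTn := hThatnn (s k)
      have hTw' := hTw (s k) (hs k)
      have hsc : t * (1 - δ) ^ (k + 1) = (t * (1 - δ) ^ k) * (1 - δ) := by ring
      constructor
      · have h1 := hTn _ ih.1
        have h2 := hKsmul _ hc _ hTw'
        have h3 := hadd _ h1 _ h2
        have h4 : (twoStageThat F G V (s k)) *ᵥ
              ((t * (1 - δ) ^ k) • w - F *ᵥ (x k - A⁻¹ *ᵥ b))
              + (t * (1 - δ) ^ k) • ((1 - δ) • w - (twoStageThat F G V (s k)) *ᵥ w)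
            = (t * (1 - δ) ^ (k + 1)) • w
              - (twoStageThat F G V (s k)) *ᵥ (F *ᵥ (x k - A⁻¹ *ᵥ b)) := by
          rw [Matrix.mulVec_sub, Matrix.mulVec_smul, hsc]
          module
        rw [h4, ← hehrec k] at h3
        exact h3
      · have h1 := hTn _ ih.2
        have h2 := hKsmul _ hc _ hTw'
        have h3 := hadd _ h1 _ h2
        have h4 : (twoStageThat F G V (s k)) *ᵥ
              ((t * (1 - δ) ^ k) • w + F *ᵥ (x k - A⁻¹ *ᵥ b))
              + (t * (1 - δ) ^ k) • ((1 - δ) • w - (twoStageThat F G V (s k)) *ᵥ w)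
            = (t * (1 - δ) ^ (k + 1)) • w
              + (twoStageThat F G V (s k)) *ᵥ (F *ᵥ (x k - A⁻¹ *ᵥ b)) := by
          rw [Matrix.mulVec_add, Matrix.mulVec_smul, hsc]
          module
        rw [h4, ← hehrec k] at h3
        exact h3
  -- norm bound
  obtain ⟨B, hB0, hB⟩ := interval_bound hKclosed hKsmul hKpointed w
  have hbound : ∀ k, ‖F *ᵥ (x k - A⁻¹ *ᵥ b)‖ ≤ (t * B) * (1 - δ) ^ k := by
    intro k
    obtain ⟨h1, h2⟩ := hmain k
    have hck : (0:ℝ) < t * (1 - δ) ^ k := by positivity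
    have hy1 : w - (t * (1 - δ) ^ k)⁻¹ • (F *ᵥ (x k - A⁻¹ *ᵥ b)) ∈ K := by
      have h3 := hKsmul _ (inv_pos.2 hck).le _ h1
      rwa [smul_sub, smul_smul, inv_mul_cancel₀ hck.ne', one_smul] at h3
    have hy2 : w + (t * (1 - δ) ^ k)⁻¹ • (F *ᵥ (x k - A⁻¹ *ᵥ b)) ∈ K := by
      have h3 := hKsmul _ (inv_pos.2 hck).le _ h2
      rwa [smul_add, smul_smul, inv_mul_cancel₀ hck.ne', one_smul] at h3
    have h5 := hB _ hy1 hy2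
    rw [norm_smul, Real.norm_eq_abs, abs_of_pos (inv_pos.2 hck)] at h5
    have h6 : ‖F *ᵥ (x k - A⁻¹ *ᵥ b)‖ ≤ (t * (1 - δ) ^ k) * B := by
      calc ‖F *ᵥ (x k - A⁻¹ *ᵥ b)‖
          = (t * (1 - δ) ^ k) * ((t * (1 - δ) ^ k)⁻¹ * ‖F *ᵥ (x k - A⁻¹ *ᵥ b)‖) := by
            field_simp
        _ ≤ (t * (1 - δ) ^ k) * B := mul_le_mul_of_nonneg_left h5 hck.le
    calc ‖F *ᵥ (x k - A⁻¹ *ᵥ b)‖ ≤ (t * (1 - δ) ^ k) * B := h6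
      _ = (t * B) * (1 - δ) ^ k := by ring
  have hehto : Filter.Tendsto (fun k => F *ᵥ (x k - A⁻¹ *ᵥ b)) Filter.atTop (nhds 0) := by
    apply squeeze_zero_norm hbound
    have h1 : Filter.Tendsto (fun k : ℕ => (1 - δ) ^ k) Filter.atTop (nhds 0) :=
      tendsto_pow_atTop_nhds_zero_of_lt_one hθ0.le hθ1
    have h2 := h1.const_mul (t * B)
    simpa using h2
  have heto : Filter.Tendsto (fun k => x k - A⁻¹ *ᵥ b) Filter.atTop (nhds 0) := by
    have h1 : ∀ k, x k - A⁻¹ *ᵥ b = F⁻¹ *ᵥ (F *ᵥ (x k - A⁻¹ *ᵥ b)) := by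
      intro k
      rw [Matrix.mulVec_mulVec, hFiF, Matrix.one_mulVec]
    have h2 := tendsto_mulVec F⁻¹ hehto
    rw [Matrix.mulVec_zero] at h2
    exact h2.congr (fun k => (h1 k).symm)
  have hfinal := heto.add_const (A⁻¹ *ᵥ b)
  rw [zero_add] at hfinal
  exact hfinal.congr (fun k => by rw [sub_add_cancel])
end

section
/- Let A ∈ ℝ^{n×n} be K-monotone, let A = U − V be a K-regular splitting and U = F − G a K-weak regular splitting of type II with V F⁻¹ G = G F⁻¹ V, and let s ≥ 1 be an integer. If G ≥_K G F⁻¹ G, then the induced splitting A = P_s − T̂_s P_s is a K-regular splitting, i.e., Q_s = Σ_{j=0}^{s−1} (F⁻¹G)^j F⁻¹ is invertible with inverse P_s, Q_s ≥_K 0, and T̂_s P_s ≥_K 0. -/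
open Matrix Finset Filter

/-! ### Auxiliary lemmas -/

attribute [local instance] Matrix.normedAddCommGroup Matrix.normedSpace

open Bornology Metric Topology

section ConeAux

variable {n : ℕ} {K : Set (Fin n → ℝ)}

theorem kc_zero_mem (hK : IsProperCone K) : (0 : Fin n → ℝ) ∈ K := by
  have h : (0 : Fin n → ℝ) ∈ K ∩ (-K) := by
    rw [hK.2.2.2.1]; exact Set.mem_singleton 0
  exact h.1

theorem kc_add_mem (hK : IsProperCone K) {x y : Fin n → ℝ} (hx : x ∈ K) (hy : y ∈ K) :
    x + y ∈ K := by
  have h : ((1:ℝ)/2) • x + ((1:ℝ)/2) • y ∈ K :=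
    hK.2.1 hx hy (by norm_num) (by norm_num) (by norm_num)
  have h2 := hK.2.2.1 2 (by norm_num) _ h
  have h3 : (2:ℝ) • (((1:ℝ)/2) • x + ((1:ℝ)/2) • y) = x + y := by
    rw [smul_add, smul_smul, smul_smul]; norm_num
  rwa [h3] at h2

theorem kc_eq_zero (hK : IsProperCone K) {x : Fin n → ℝ} (hx : x ∈ K) (hx' : -x ∈ K) :
    x = 0 := by
  have h : x ∈ K ∩ (-K) := ⟨hx, by simpa [Set.mem_neg] using hx'⟩
  rw [hK.2.2.2.1] at h
  exact h

theorem knn_zero (hK : IsProperCone K) : KNonneg K (0 : Matrix (Fin n) (Fin n) ℝ) := by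
  intro x hx; rw [Matrix.zero_mulVec]; exact kc_zero_mem hK

theorem knn_one (hK : IsProperCone K) : KNonneg K (1 : Matrix (Fin n) (Fin n) ℝ) := by
  intro x hx; rwa [Matrix.one_mulVec]

theorem knn_add (hK : IsProperCone K) {A B : Matrix (Fin n) (Fin n) ℝ}
    (hA : KNonneg K A) (hB : KNonneg K B) : KNonneg K (A + B) := by
  intro x hx; rw [Matrix.add_mulVec]; exact kc_add_mem hK (hA x hx) (hB x hx)

theorem knn_mul {A B : Matrix (Fin n) (Fin n) ℝ}
    (hA : KNonneg K A) (hB : KNonneg K B) : KNonneg K (A * B) := by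
  intro x hx; rw [← Matrix.mulVec_mulVec]; exact hA _ (hB x hx)

theorem knn_pow (hK : IsProperCone K) {A : Matrix (Fin n) (Fin n) ℝ}
    (hA : KNonneg K A) (j : ℕ) : KNonneg K (A ^ j) := by
  induction j with
  | zero => rw [pow_zero]; exact knn_one hK
  | succ j ih => rw [pow_succ]; exact knn_mul ih hA

theorem knn_sum (hK : IsProperCone K) {ι : Type*} {t : Finset ι}
    {f : ι → Matrix (Fin n) (Fin n) ℝ} (h : ∀ j ∈ t, KNonneg K (f j)) :
    KNonneg K (∑ j ∈ t, f j) :=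
  Finset.sum_induction f (KNonneg K) (fun _ _ ha hb => knn_add hK ha hb) (knn_zero hK) h

theorem knn_smul (hK : IsProperCone K) {A : Matrix (Fin n) (Fin n) ℝ} {c : ℝ}
    (hc : 0 ≤ c) (hA : KNonneg K A) : KNonneg K (c • A) := by
  intro x hx; rw [Matrix.smul_mulVec]; exact hK.2.2.1 c hc _ (hA x hx)

theorem knn_limit (hK : IsProperCone K) {A : ℕ → Matrix (Fin n) (Fin n) ℝ}
    {L : Matrix (Fin n) (Fin n) ℝ} (h : Tendsto A atTop (𝓝 L))
    (hA : ∀ᶠ k in atTop, KNonneg K (A k)) : KNonneg K L := by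
  intro x hx
  have hcont : Continuous (fun M : Matrix (Fin n) (Fin n) ℝ => M.mulVec x) :=
    continuous_id.matrix_mulVec continuous_const
  exact hK.1.mem_of_tendsto ((hcont.tendsto L).comp h) (hA.mono fun k hk => hk x hx)

theorem knn_pointed (hK : IsProperCone K) {M : Matrix (Fin n) (Fin n) ℝ}
    (h1 : KNonneg K M) (h2 : KNonneg K (-M)) : M = 0 := by
  have hz : ∀ x ∈ K, M.mulVec x = 0 := by
    intro x hx
    refine kc_eq_zero hK (h1 x hx) ?_
    have := h2 x hx
    rwa [Matrix.neg_mulVec] at this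
  obtain ⟨e, he⟩ := hK.2.2.2.2
  have heK : e ∈ K := interior_subset he
  have hall : ∀ v : Fin n → ℝ, M.mulVec v = 0 := by
    intro v
    obtain ⟨δ, hδ, hball⟩ := Metric.isOpen_iff.mp isOpen_interior e he
    set ε : ℝ := δ / (2 * (‖v‖ + 1)) with hε
    have hεpos : 0 < ε := by positivity
    have hmem : e + ε • v ∈ K := by
      refine interior_subset (hball ?_)
      rw [Metric.mem_ball, dist_eq_norm, add_sub_cancel_left, norm_smul, Real.norm_eq_abs,
        abs_of_pos hεpos]
      have hkey : ε * (‖v‖ + 1) = δ / 2 := by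
        rw [hε]; field_simp
      nlinarith [norm_nonneg v, hεpos]
    have h1' := hz _ hmem
    have h2' := hz _ heK
    rw [Matrix.mulVec_add, Matrix.mulVec_smul, h2', zero_add] at h1'
    simpa [hεpos.ne', smul_eq_zero] using h1'
  ext i j
  have := congrFun (hall (Pi.single j 1)) i
  simpa using this

theorem knn_bounded (hK : IsProperCone K) (B : Matrix (Fin n) (Fin n) ℝ) :
    ∃ C : ℝ, ∀ M : Matrix (Fin n) (Fin n) ℝ,
      KNonneg K M → KNonneg K (B - M) → ‖M‖ ≤ C := by
  by_contra hcon
  push_neg at hcon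
  choose M hM1 hM2 hM3 using fun k : ℕ => hcon (k : ℝ)
  have hpos : ∀ k : ℕ, (0:ℝ) < ‖M k‖ := fun k =>
    lt_of_le_of_lt (Nat.cast_nonneg k) (hM3 k)
  set N : ℕ → Matrix (Fin n) (Fin n) ℝ := fun k => ‖M k‖⁻¹ • M k with hN
  have hNnorm : ∀ k, ‖N k‖ = 1 := by
    intro k
    rw [hN]
    simp only [norm_smul, Real.norm_eq_abs, abs_of_pos (inv_pos.mpr (hpos k))]
    exact inv_mul_cancel₀ (hpos k).ne'
  have hNball : ∀ k, N k ∈ Metric.closedBall (0 : Matrix (Fin n) (Fin n) ℝ) 1 := by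
    intro k; rw [Metric.mem_closedBall, dist_zero_right, hNnorm k]
  obtain ⟨L, hL, φ, hφ, hconv⟩ :=
    (isCompact_closedBall (0 : Matrix (Fin n) (Fin n) ℝ) 1).tendsto_subseq hNball
  have hconv' : Tendsto (fun k => N (φ k)) atTop (𝓝 L) := hconv
  have hLnorm : ‖L‖ = 1 := by
    have h1 : Tendsto (fun k => ‖N (φ k)‖) atTop (𝓝 ‖L‖) :=
      (continuous_norm.tendsto L).comp hconv'
    have h2 : Tendsto (fun k => ‖N (φ k)‖) atTop (𝓝 1) := by
      simp only [hNnorm]; exact tendsto_const_nhds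
    exact tendsto_nhds_unique h1 h2
  have hLpos : KNonneg K L :=
    knn_limit hK hconv' (Eventually.of_forall fun k =>
      knn_smul hK (inv_nonneg.mpr (hpos (φ k)).le) (hM1 (φ k)))
  have hnormtop : Tendsto (fun k => ‖M (φ k)‖) atTop atTop := by
    apply tendsto_atTop_mono (fun k => (hM3 (φ k)).le)
    exact tendsto_natCast_atTop_atTop.comp hφ.tendsto_atTop
  have hinv0 : Tendsto (fun k => ‖M (φ k)‖⁻¹) atTop (𝓝 0) := hnormtop.inv_tendsto_atTop
  have hsm : Tendsto (fun k => ‖M (φ k)‖⁻¹ • B) atTop (𝓝 (0 : Matrix (Fin n) (Fin n) ℝ)) := by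
    have := hinv0.smul_const B
    simpa using this
  have hdiff : Tendsto (fun k => ‖M (φ k)‖⁻¹ • B - N (φ k)) atTop (𝓝 (-L)) := by
    have := hsm.sub hconv'
    simpa using this
  have hLneg : KNonneg K (-L) := by
    refine knn_limit hK hdiff (Eventually.of_forall fun k => ?_)
    have := knn_smul hK (inv_nonneg.mpr (hpos (φ k)).le) (hM2 (φ k))
    have heq : ‖M (φ k)‖⁻¹ • (B - M (φ k)) = ‖M (φ k)‖⁻¹ • B - N (φ k) := by
      rw [hN, smul_sub]
    rwa [heq] at this
  have hL0 : L = 0 := knn_pointed hK hLpos hLneg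
  rw [hL0, norm_zero] at hLnorm
  exact zero_ne_one hLnorm

theorem pow_subseq (hK : IsProperCone K) {B : Matrix (Fin n) (Fin n) ℝ}
    (hB : KNonneg K B) (hD : KNonneg K (B - B ^ 2)) (h1B : IsUnit (1 - B))
    (s : ℕ) (hs : 1 ≤ s) :
    ∃ φ : ℕ → ℕ, StrictMono φ ∧
      Tendsto (fun k => B ^ (s * (φ k + 1))) atTop (𝓝 0) := by
  classical
  have hstep : ∀ m : ℕ, KNonneg K (B ^ (m + 1) - B ^ (m + 2)) := by
    intro m
    have h : B ^ m * (B - B ^ 2) = B ^ (m + 1) - B ^ (m + 2) := by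
      rw [mul_sub, ← pow_succ, ← pow_add]
    rw [← h]
    exact knn_mul (knn_pow hK hB m) hD
  have hmono : ∀ a d : ℕ, KNonneg K (B ^ (a + 1) - B ^ (a + 1 + d)) := by
    intro a d
    induction d with
    | zero => simpa [sub_self] using knn_zero hK
    | succ d ih =>
      have h2 : KNonneg K (B ^ (a + d + 1) - B ^ (a + d + 2)) := hstep (a + d)
      have key : B ^ (a+1) - B ^ (a+1+(d+1)) =
          (B ^ (a+1) - B ^ (a+1+d)) + (B ^ (a+d+1) - B ^ (a+d+2)) := by
        have e1 : a+1+d = a+d+1 := by omega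
        have e2 : a+1+(d+1) = a+d+2 := by omega
        rw [e1, e2]; abel
      rw [key]; exact knn_add hK ih h2
  have hBm : ∀ m : ℕ, KNonneg K (B ^ (m+1)) := fun m => knn_pow hK hB (m+1)
  have hBub : ∀ m : ℕ, KNonneg K (B - B ^ (m+1)) := by
    intro m
    have h := hmono 0 m
    have e0 : (0:ℕ) + 1 = 1 := rfl
    have e1 : (0:ℕ) + 1 + m = m + 1 := by omega
    rw [e1, e0, pow_one] at h
    exact h
  obtain ⟨C, hC⟩ := knn_bounded hK B
  have hball : ∀ k : ℕ, B ^ (s * (k+1)) ∈ Metric.closedBall (0 : Matrix (Fin n) (Fin n) ℝ) C := by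
    intro k
    have e : s * (k+1) = (s*(k+1) - 1) + 1 := by
      have : 1 ≤ s * (k+1) := Nat.one_le_iff_ne_zero.mpr (by positivity)
      omega
    rw [Metric.mem_closedBall, dist_zero_right, e]
    exact hC _ (hBm _) (hBub _)
  obtain ⟨P, hPmem, φ, hφ, hconv⟩ :=
    (isCompact_closedBall (0 : Matrix (Fin n) (Fin n) ℝ) C).tendsto_subseq hball
  have hu : Tendsto (fun k => B ^ (s * (φ k + 1))) atTop (𝓝 P) := hconv
  have hmulBcont : Continuous (fun M : Matrix (Fin n) (Fin n) ℝ => M * B) :=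
    continuous_id.matrix_mul continuous_const
  have hu1 : Tendsto (fun k => B ^ (s * (φ k + 1)) * B) atTop (𝓝 (P * B)) :=
    (hmulBcont.tendsto P).comp hu
  have hexp1 : ∀ k, 1 ≤ s * (φ k + 1) := fun k =>
    Nat.one_le_iff_ne_zero.mpr (by positivity)
  have hPB1 : KNonneg K (P - P * B) := by
    refine knn_limit hK (A := fun k => B ^ (s * (φ k + 1)) - B ^ (s * (φ k + 1)) * B)
      (hu.sub hu1) (Eventually.of_forall fun k => ?_)
    have e : s * (φ k + 1) = (s * (φ k + 1) - 1) + 1 := by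
      have := hexp1 k; omega
    have e2 : s * (φ k + 1) + 1 = (s * (φ k + 1) - 1) + 2 := by
      have := hexp1 k; omega
    have h := hstep (s * (φ k + 1) - 1)
    rw [← e, ← e2] at h
    have hpw : B ^ (s * (φ k + 1) + 1) = B ^ (s * (φ k + 1)) * B := pow_succ B _
    rwa [hpw] at h
  have hexp : Tendsto (fun j => s * (φ j + 1)) atTop atTop := by
    apply tendsto_atTop_mono (fun j => ?_) tendsto_id
    have h1 : φ j + 1 ≤ s * (φ j + 1) := Nat.le_mul_of_pos_left _ hs
    have h2 : j ≤ φ j := hφ.le_apply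
    simp only [id_eq]
    omega
  have hk : ∀ k, KNonneg K (B ^ (s * (φ k + 1)) * B - P) := by
    intro k
    refine knn_limit hK (A := fun j => B ^ (s * (φ k + 1)) * B - B ^ (s * (φ j + 1)))
      (tendsto_const_nhds.sub hu) ?_
    have hev : ∀ᶠ j in atTop, s * (φ k + 1) + 1 ≤ s * (φ j + 1) :=
      hexp.eventually_ge_atTop _
    refine hev.mono fun j hj => ?_
    have h := hmono (s * (φ k + 1)) (s * (φ j + 1) - (s * (φ k + 1) + 1))
    have e : s * (φ k + 1) + 1 + (s * (φ j + 1) - (s * (φ k + 1) + 1)) = s * (φ j + 1) := by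
      omega
    rw [e] at h
    have hpw : B ^ (s * (φ k + 1) + 1) = B ^ (s * (φ k + 1)) * B := pow_succ B _
    rwa [hpw] at h
  have hPB2 : KNonneg K (P * B - P) :=
    knn_limit hK (A := fun k => B ^ (s * (φ k + 1)) * B - P)
      (hu1.sub tendsto_const_nhds) (Eventually.of_forall hk)
  have hPBeq : P * B = P := by
    have h0 : P * B - P = 0 := by
      refine knn_pointed hK hPB2 ?_
      have : -(P * B - P) = P - P * B := by abel
      rw [this]; exact hPB1
    exact sub_eq_zero.mp h0
  have h1Bdet : IsUnit (1 - B).det := (Matrix.isUnit_iff_isUnit_det _).mp h1B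
  have hP0 : P = 0 := by
    have h2 : P * (1 - B) = 0 := by rw [mul_sub, mul_one, hPBeq, sub_self]
    calc P = P * ((1 - B) * (1 - B)⁻¹) := by
            rw [Matrix.mul_nonsing_inv _ h1Bdet, mul_one]
      _ = P * (1 - B) * (1 - B)⁻¹ := by rw [mul_assoc]
      _ = 0 := by rw [h2, zero_mul]
  rw [hP0] at hu
  exact ⟨φ, hφ, hu⟩

end ConeAux

theorem stmt_10 {n : ℕ} (K : Set (Fin n → ℝ)) (hK : IsProperCone K)
    (A U V F G : Matrix (Fin n) (Fin n) ℝ)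
    (hmono : KMonotone K A)
    (houter : KRegularSplitting K A U V)
    (hinner : KWeakRegularSplittingII K U F G)
    (hcomm : V * F⁻¹ * G = G * F⁻¹ * V)
    (hG : KNonneg K (G - G * F⁻¹ * G)) (s : ℕ) (hs : 1 ≤ s) :
    IsUnit (twoStageQ F G s) ∧ KNonneg K (twoStageQ F G s) ∧
    A = (twoStageQ F G s)⁻¹ - twoStageThat F G V s * (twoStageQ F G s)⁻¹ ∧
    KNonneg K (twoStageThat F G V s * (twoStageQ F G s)⁻¹) := by
  classical
  obtain ⟨hAUV, hU, hUi, hV⟩ := houter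
  obtain ⟨hUFG, hF, hFi, hGF⟩ := hinner
  have hFdet : IsUnit F.det := (Matrix.isUnit_iff_isUnit_det F).mp hF
  have hFF : F⁻¹ * F = 1 := Matrix.nonsing_inv_mul F hFdet
  have hFF' : F * F⁻¹ = 1 := Matrix.mul_nonsing_inv F hFdet
  -- basic identity for the defect
  have hDiden : G * F⁻¹ - (G * F⁻¹) ^ 2 = (G - G * F⁻¹ * G) * F⁻¹ := by
    rw [sub_mul, pow_two]
    congr 1
    exact (mul_assoc (G * F⁻¹) G F⁻¹).symm
  have hD : KNonneg K (G * F⁻¹ - (G * F⁻¹) ^ 2) := by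
    rw [hDiden]; exact knn_mul hG hFi
  have h1B : IsUnit (1 - G * F⁻¹) := by
    have h : 1 - G * F⁻¹ = U * F⁻¹ := by rw [hUFG, sub_mul, hFF']
    rw [h]; exact hU.mul (Matrix.isUnit_nonsing_inv_iff.mpr hF)
  obtain ⟨φ, hφ, hconv0⟩ := pow_subseq hK hGF hD h1B s hs
  -- commutation facts
  have hcB : V * F⁻¹ * (G * F⁻¹) = G * F⁻¹ * (V * F⁻¹) := by
    calc V * F⁻¹ * (G * F⁻¹) = V * F⁻¹ * G * F⁻¹ := (mul_assoc _ _ _).symm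
      _ = G * F⁻¹ * V * F⁻¹ := by rw [hcomm]
      _ = G * F⁻¹ * (V * F⁻¹) := mul_assoc _ _ _
  have hcBc : Commute (V * F⁻¹) (G * F⁻¹) := hcB
  have hcS : Commute (V * F⁻¹) (∑ j ∈ Finset.range s, (G * F⁻¹) ^ j) :=
    Commute.sum_right _ _ _ fun j _ => hcBc.pow_right j
  have hgeom : (1 - G * F⁻¹) * (∑ j ∈ Finset.range s, (G * F⁻¹) ^ j)
      = 1 - (G * F⁻¹) ^ s := by
    have h := mul_geom_sum (G * F⁻¹) s
    have h2 : (1 - G * F⁻¹) * (∑ j ∈ Finset.range s, (G * F⁻¹) ^ j)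
        = -((G * F⁻¹ - 1) * ∑ j ∈ Finset.range s, (G * F⁻¹) ^ j) := by
      rw [← neg_mul, neg_sub]
    rw [h2, h, neg_sub]
  have hpowPull : ∀ j : ℕ, (F⁻¹ * G) ^ j * F⁻¹ = F⁻¹ * (G * F⁻¹) ^ j := by
    intro j
    induction j with
    | zero => simp
    | succ j ih =>
      rw [pow_succ', pow_succ']
      simp only [mul_assoc]
      rw [ih]
  have hQ : twoStageQ F G s = F⁻¹ * (∑ j ∈ Finset.range s, (G * F⁻¹) ^ j) := by
    rw [twoStageQ, Finset.sum_mul, Finset.mul_sum]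
    exact Finset.sum_congr rfl fun j _ => hpowPull j
  -- abbreviate the geometric sum
  set S : Matrix (Fin n) (Fin n) ℝ := ∑ j ∈ Finset.range s, (G * F⁻¹) ^ j with hSdef
  -- S is invertible
  have hSdetne : S.det ≠ 0 := by
    intro hdet
    obtain ⟨v, hv0, hv⟩ := Matrix.exists_mulVec_eq_zero_iff.mpr hdet
    have h1 : (1 - (G * F⁻¹) ^ s).mulVec v = 0 := by
      rw [← hgeom, ← Matrix.mulVec_mulVec, hv, Matrix.mulVec_zero]
    have h2 : ((G * F⁻¹) ^ s).mulVec v = v := by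
      rw [Matrix.sub_mulVec, Matrix.one_mulVec] at h1
      exact (sub_eq_zero.mp h1).symm
    have h3 : ∀ m : ℕ, ((G * F⁻¹) ^ (s * (m + 1))).mulVec v = v := by
      intro m
      induction m with
      | zero => simpa using h2
      | succ m ih =>
        have e : s * (m + 1 + 1) = s * (m + 1) + s := by ring
        rw [e, pow_add, ← Matrix.mulVec_mulVec, h2, ih]
    have h4 : Tendsto (fun k => ((G * F⁻¹) ^ (s * (φ k + 1))).mulVec v) atTop
        (𝓝 ((0 : Matrix (Fin n) (Fin n) ℝ).mulVec v)) :=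
      ((continuous_id.matrix_mulVec continuous_const).tendsto _).comp hconv0
    rw [Matrix.zero_mulVec] at h4
    have h5 : Tendsto (fun _ : ℕ => v) atTop (𝓝 (0 : Fin n → ℝ)) := by
      have hfun : (fun k => ((G * F⁻¹) ^ (s * (φ k + 1))).mulVec v) = fun _ : ℕ => v := by
        funext k; exact h3 (φ k)
      rwa [hfun] at h4
    exact hv0 (tendsto_nhds_unique h5 tendsto_const_nhds).symm
  have hSunit : IsUnit S := (Matrix.isUnit_iff_isUnit_det S).mpr
    (isUnit_iff_ne_zero.mpr hSdetne)
  have hSdetu : IsUnit S.det := (Matrix.isUnit_iff_isUnit_det S).mp hSunit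
  have hFinv : IsUnit (F⁻¹) := Matrix.isUnit_nonsing_inv_iff.mpr hF
  have hQunit : IsUnit (twoStageQ F G s) := by rw [hQ]; exact hFinv.mul hSunit
  -- K-nonnegativity of Q
  have hSpos : KNonneg K S := by
    rw [hSdef]
    exact knn_sum hK fun j _ => knn_pow hK hGF j
  have hQpos : KNonneg K (twoStageQ F G s) := by
    rw [hQ]; exact knn_mul hFi hSpos
  -- splitting identity
  have hAF : A * F⁻¹ = 1 - G * F⁻¹ - V * F⁻¹ := by
    rw [hAUV, hUFG, sub_mul, sub_mul, hFF']
  have hAQ : A * twoStageQ F G s = 1 - twoStageThat F G V s := by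
    rw [hQ, ← mul_assoc, hAF, twoStageThat, ← hSdef]
    rw [sub_mul, hgeom, hcS.eq, sub_sub]
  have hQdet : IsUnit (twoStageQ F G s).det :=
    (Matrix.isUnit_iff_isUnit_det _).mp hQunit
  have hsplit : A = (twoStageQ F G s)⁻¹ - twoStageThat F G V s * (twoStageQ F G s)⁻¹ := by
    calc A = A * (twoStageQ F G s * (twoStageQ F G s)⁻¹) := by
            rw [Matrix.mul_nonsing_inv _ hQdet, mul_one]
      _ = A * twoStageQ F G s * (twoStageQ F G s)⁻¹ := by rw [mul_assoc]
      _ = (1 - twoStageThat F G V s) * (twoStageQ F G s)⁻¹ := by rw [hAQ]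
      _ = (twoStageQ F G s)⁻¹ - twoStageThat F G V s * (twoStageQ F G s)⁻¹ := by
            rw [sub_mul, one_mul]
  -- goal 4 : K-nonnegativity of T̂ * Q⁻¹
  have hQinv : (twoStageQ F G s)⁻¹ = S⁻¹ * F := by
    rw [hQ, Matrix.mul_inv_rev, Matrix.nonsing_inv_nonsing_inv F hFdet]
  have hSS : S * S⁻¹ = 1 := Matrix.mul_nonsing_inv S hSdetu
  have hSS' : S⁻¹ * S = 1 := Matrix.nonsing_inv_mul S hSdetu
  have hcSinv : S⁻¹ * (V * F⁻¹) = V * F⁻¹ * S⁻¹ := by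
    calc S⁻¹ * (V * F⁻¹) = S⁻¹ * (V * F⁻¹) * (S * S⁻¹) := by rw [hSS, mul_one]
      _ = S⁻¹ * (V * F⁻¹ * S) * S⁻¹ := by simp only [mul_assoc]
      _ = S⁻¹ * (S * (V * F⁻¹)) * S⁻¹ := by rw [hcS.eq]
      _ = S⁻¹ * S * (V * F⁻¹ * S⁻¹) := by simp only [mul_assoc]
      _ = V * F⁻¹ * S⁻¹ := by rw [hSS', one_mul]
  have hTQ : twoStageThat F G V s * (twoStageQ F G s)⁻¹
      = (G * F⁻¹) ^ s * (S⁻¹ * F) + V := by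
    rw [hQinv, twoStageThat, ← hSdef, add_mul]
    congr 1
    calc S * (V * F⁻¹) * (S⁻¹ * F) = S * (V * F⁻¹ * S⁻¹ * F) := by simp only [mul_assoc]
      _ = S * (S⁻¹ * (V * F⁻¹) * F) := by rw [← hcSinv]
      _ = S * S⁻¹ * (V * (F⁻¹ * F)) := by simp only [mul_assoc]
      _ = V := by rw [hSS, hFF, one_mul, mul_one]
  set X : Matrix (Fin n) (Fin n) ℝ := (G * F⁻¹) ^ s * (S⁻¹ * F) with hXdef
  obtain ⟨t, ht⟩ : ∃ t, s = t + 1 := ⟨s - 1, by omega⟩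
  have h1 : (1 - (G * F⁻¹) ^ s) * S⁻¹ = 1 - G * F⁻¹ := by
    rw [← hgeom, mul_assoc, hSS, mul_one]
  have hXrec : X = (G * F⁻¹) ^ t * (G - G * F⁻¹ * G) + (G * F⁻¹) ^ s * X := by
    have h2 : X - (G * F⁻¹) ^ s * X = (G * F⁻¹) ^ t * (G - G * F⁻¹ * G) := by
      calc X - (G * F⁻¹) ^ s * X
          = (G * F⁻¹) ^ s * ((1 - (G * F⁻¹) ^ s) * (S⁻¹ * F)) := by
            rw [hXdef, sub_mul, one_mul, mul_sub]
        _ = (G * F⁻¹) ^ s * ((1 - G * F⁻¹) * F) := by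
            rw [show (1 - (G * F⁻¹) ^ s) * (S⁻¹ * F)
                = (1 - (G * F⁻¹) ^ s) * S⁻¹ * F from (mul_assoc _ _ _).symm, h1]
        _ = (G * F⁻¹) ^ t * (G * F⁻¹ * ((1 - G * F⁻¹) * F)) := by
            rw [ht, pow_succ, mul_assoc]
        _ = (G * F⁻¹) ^ t * (G - G * F⁻¹ * G) := by
            congr 1
            rw [← mul_assoc, mul_sub, mul_one, ← pow_two, hDiden, mul_assoc, hFF, mul_one]
    exact sub_eq_iff_eq_add.mp h2
  have hunroll : ∀ m : ℕ, X =
      (∑ k ∈ Finset.range m, (G * F⁻¹) ^ (s * k) * ((G * F⁻¹) ^ t * (G - G * F⁻¹ * G)))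
      + (G * F⁻¹) ^ (s * m) * X := by
    intro m
    induction m with
    | zero => simp
    | succ m ih =>
      have h3 : (G * F⁻¹) ^ (s * m) * X
          = (G * F⁻¹) ^ (s * m) * ((G * F⁻¹) ^ t * (G - G * F⁻¹ * G))
            + (G * F⁻¹) ^ (s * (m + 1)) * X := by
        conv_lhs => rw [hXrec]
        rw [mul_add]
        congr 1
        rw [← mul_assoc, ← pow_add, Nat.mul_succ]
      calc X = (∑ k ∈ Finset.range m,
              (G * F⁻¹) ^ (s * k) * ((G * F⁻¹) ^ t * (G - G * F⁻¹ * G)))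
            + (G * F⁻¹) ^ (s * m) * X := ih
        _ = (∑ k ∈ Finset.range m,
              (G * F⁻¹) ^ (s * k) * ((G * F⁻¹) ^ t * (G - G * F⁻¹ * G)))
            + ((G * F⁻¹) ^ (s * m) * ((G * F⁻¹) ^ t * (G - G * F⁻¹ * G))
              + (G * F⁻¹) ^ (s * (m + 1)) * X) := by rw [← h3]
        _ = (∑ k ∈ Finset.range (m + 1),
              (G * F⁻¹) ^ (s * k) * ((G * F⁻¹) ^ t * (G - G * F⁻¹ * G)))
            + (G * F⁻¹) ^ (s * (m + 1)) * X := by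
            rw [Finset.sum_range_succ, add_assoc]
  have hXpos : KNonneg K X := by
    intro x hx
    have hterm : ∀ m : ℕ,
        (∑ k ∈ Finset.range m,
          (G * F⁻¹) ^ (s * k) * ((G * F⁻¹) ^ t * (G - G * F⁻¹ * G))).mulVec x ∈ K := by
      intro m
      exact knn_sum hK (fun j _ =>
        knn_mul (knn_pow hK hGF _) (knn_mul (knn_pow hK hGF _) hG)) x hx
    have hlim : Tendsto (fun k => ((G * F⁻¹) ^ (s * (φ k + 1)) * X).mulVec x) atTop
        (𝓝 (0 : Fin n → ℝ)) := by
      have hmc : Tendsto (fun k => (G * F⁻¹) ^ (s * (φ k + 1)) * X) atTop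
          (𝓝 ((0 : Matrix (Fin n) (Fin n) ℝ) * X)) :=
        ((continuous_id.matrix_mul continuous_const).tendsto _).comp hconv0
      rw [zero_mul] at hmc
      have hvc : Tendsto (fun M : Matrix (Fin n) (Fin n) ℝ => M.mulVec x)
          (𝓝 (0 : Matrix (Fin n) (Fin n) ℝ))
          (𝓝 ((0 : Matrix (Fin n) (Fin n) ℝ).mulVec x)) :=
        (continuous_id.matrix_mulVec continuous_const).tendsto _
      rw [Matrix.zero_mulVec] at hvc
      exact hvc.comp hmc
    have hXx : Tendsto (fun k => (∑ j ∈ Finset.range (φ k + 1),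
        (G * F⁻¹) ^ (s * j) * ((G * F⁻¹) ^ t * (G - G * F⁻¹ * G))).mulVec x) atTop
        (𝓝 (X.mulVec x)) := by
      have heq : ∀ k : ℕ, (∑ j ∈ Finset.range (φ k + 1),
          (G * F⁻¹) ^ (s * j) * ((G * F⁻¹) ^ t * (G - G * F⁻¹ * G))).mulVec x
          = X.mulVec x - ((G * F⁻¹) ^ (s * (φ k + 1)) * X).mulVec x := by
        intro k
        have h4 : (∑ j ∈ Finset.range (φ k + 1),
            (G * F⁻¹) ^ (s * j) * ((G * F⁻¹) ^ t * (G - G * F⁻¹ * G)))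
            = X - (G * F⁻¹) ^ (s * (φ k + 1)) * X :=
          eq_sub_iff_add_eq.mpr (hunroll (φ k + 1)).symm
        rw [h4, Matrix.sub_mulVec]
      simp only [heq]
      simpa using (tendsto_const_nhds :
        Tendsto (fun _ : ℕ => X.mulVec x) atTop (𝓝 (X.mulVec x))).sub hlim
    exact hK.1.mem_of_tendsto hXx (Eventually.of_forall fun k => hterm _)
  have hG4 : KNonneg K (twoStageThat F G V s * (twoStageQ F G s)⁻¹) := by
    rw [hTQ]
    intro x hx
    rw [Matrix.add_mulVec]
    exact kc_add_mem hK (hXpos x hx) (hV x hx)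
  exact ⟨hQunit, hQpos, hsplit, hG4⟩
end

section
/- Let A ∈ ℝ^{n×n} be K-monotone and A = U − V a K-regular splitting. Let U = F − G = F̄ − Ḡ be two K-weak regular splittings of type II of U, with V F⁻¹ G = G F⁻¹ V and V F̄⁻¹ Ḡ = Ḡ F̄⁻¹ V, and let s ≥ 1 be an integer. If Ḡ F̄⁻¹ ≥_K G F⁻¹ and T̂_s P_s ≥_K 0, then ρ(T_s) ≤ ρ(T̄_s) < 1, where T_s, T̂_s, P_s are built from the splitting U = F − G and T̄_s from U = F̄ − Ḡ. -/
open Matrix Finset Filter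

/-! ### Auxiliary development -/

attribute [local instance] Matrix.linftyOpNormedAddCommGroup Matrix.linftyOpNormedSpace
  Matrix.linftyOpNormedRing Matrix.linftyOpNormedAlgebra

namespace KAux

variable {n : ℕ} {K : Set (Fin n → ℝ)}

/-! #### Cone basics -/

theorem smul_mem (hK : IsProperCone K) {c : ℝ} (hc : 0 ≤ c) {x : Fin n → ℝ} (hx : x ∈ K) :
    c • x ∈ K := hK.2.2.1 c hc x hx

theorem zero_mem (hK : IsProperCone K) : (0 : Fin n → ℝ) ∈ K := by
  obtain ⟨u, hu⟩ := hK.2.2.2.2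
  simpa using smul_mem hK le_rfl (interior_subset hu)

theorem add_mem (hK : IsProperCone K) {x y : Fin n → ℝ} (hx : x ∈ K) (hy : y ∈ K) :
    x + y ∈ K := by
  have h := hK.2.1 hx hy (by norm_num : (0:ℝ) ≤ 1/2) (by norm_num : (0:ℝ) ≤ 1/2) (by norm_num)
  have h2 := smul_mem hK (by norm_num : (0:ℝ) ≤ 2) h
  have : (2:ℝ) • ((1/2 : ℝ) • x + (1/2 : ℝ) • y) = x + y := by
    rw [smul_add, smul_smul, smul_smul]; norm_num
  rwa [this] at h2

theorem pointed (hK : IsProperCone K) {x : Fin n → ℝ} (hx : x ∈ K) (hx' : -x ∈ K) : x = 0 := by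
  have : x ∈ K ∩ (-K) := ⟨hx, by simpa [Set.mem_neg] using hx'⟩
  rw [hK.2.2.2.1] at this
  simpa using this

theorem sum_mem (hK : IsProperCone K) {ι : Type*} {s : Finset ι} {f : ι → Fin n → ℝ}
    (h : ∀ i ∈ s, f i ∈ K) : ∑ i ∈ s, f i ∈ K := by
  classical
  induction s using Finset.induction_on with
  | empty => simpa using zero_mem hK
  | insert _ _ hni ih =>
    rw [Finset.sum_insert hni]
    exact add_mem hK (h _ (Finset.mem_insert_self _ _))
      (ih fun i hi => h i (Finset.mem_insert_of_mem hi))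

theorem mem_of_tendsto (hK : IsProperCone K) {f : ℕ → Fin n → ℝ} {x : Fin n → ℝ}
    (h : Tendsto f atTop (nhds x)) (hf : ∀ m, f m ∈ K) : x ∈ K :=
  hK.1.mem_of_tendsto h (Filter.Eventually.of_forall hf)

/-! #### KNonneg basics -/

theorem kn_apply {M : Matrix (Fin n) (Fin n) ℝ} (hM : KNonneg K M) {x : Fin n → ℝ}
    (hx : x ∈ K) : M.mulVec x ∈ K := hM x hx

theorem kn_mul {M N : Matrix (Fin n) (Fin n) ℝ} (hM : KNonneg K M) (hN : KNonneg K N) :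
    KNonneg K (M * N) := fun x hx => by
  rw [← Matrix.mulVec_mulVec]; exact hM _ (hN _ hx)

theorem kn_one : KNonneg K (1 : Matrix (Fin n) (Fin n) ℝ) := fun x hx => by
  rwa [Matrix.one_mulVec]

theorem kn_pow {M : Matrix (Fin n) (Fin n) ℝ} (hM : KNonneg K M) (m : ℕ) :
    KNonneg K (M ^ m) := by
  induction m with
  | zero => simpa using kn_one
  | succ m ih => rw [pow_succ]; exact kn_mul ih hM

theorem kn_add (hK : IsProperCone K) {M N : Matrix (Fin n) (Fin n) ℝ} (hM : KNonneg K M)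
    (hN : KNonneg K N) : KNonneg K (M + N) := fun x hx => by
  rw [Matrix.add_mulVec]; exact add_mem hK (hM _ hx) (hN _ hx)

theorem kn_smul (hK : IsProperCone K) {M : Matrix (Fin n) (Fin n) ℝ} {c : ℝ} (hc : 0 ≤ c)
    (hM : KNonneg K M) : KNonneg K (c • M) := fun x hx => by
  rw [Matrix.smul_mulVec]; exact smul_mem hK hc (hM _ hx)

theorem sum_mulVec {ι : Type*} (s : Finset ι) (f : ι → Matrix (Fin n) (Fin n) ℝ)
    (x : Fin n → ℝ) : (∑ i ∈ s, f i).mulVec x = ∑ i ∈ s, (f i).mulVec x := by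
  classical
  induction s using Finset.induction_on with
  | empty => simp [Matrix.zero_mulVec]
  | insert _ _ hni ih =>
    rw [Finset.sum_insert hni, Finset.sum_insert hni, Matrix.add_mulVec, ih]

theorem kn_zero (hK : IsProperCone K) : KNonneg K (0 : Matrix (Fin n) (Fin n) ℝ) :=
  fun x _ => by rw [Matrix.zero_mulVec]; exact zero_mem hK

theorem kn_sum (hK : IsProperCone K) {ι : Type*} {s : Finset ι}
    {f : ι → Matrix (Fin n) (Fin n) ℝ} (h : ∀ i ∈ s, KNonneg K (f i)) :
    KNonneg K (∑ i ∈ s, f i) := fun x hx => by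
  rw [sum_mulVec]
  exact sum_mem hK fun i hi => h i hi x hx

theorem kn_powSub (hK : IsProperCone K) {B B' : Matrix (Fin n) (Fin n) ℝ}
    (hB : KNonneg K B) (hD : KNonneg K (B' - B)) (m : ℕ) : KNonneg K (B' ^ m - B ^ m) := by
  have hB' : KNonneg K B' := by
    have := kn_add hK hD hB
    rwa [sub_add_cancel] at this
  induction m with
  | zero => simp only [pow_zero, sub_self]; exact kn_zero hK
  | succ m ih =>
    have key : B' ^ (m+1) - B ^ (m+1) = B' * (B' ^ m - B ^ m) + (B' - B) * B ^ m := by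
      rw [mul_sub, sub_mul, ← pow_succ', ← pow_succ']; abel
    rw [key]
    exact kn_add hK (kn_mul hB' ih) (kn_mul hD (kn_pow hB m))

/-! #### Normality, dual functional, interior bound -/

theorem norm_mono (hK : IsProperCone K) :
    ∃ κ : ℝ, 0 < κ ∧ ∀ z w : Fin n → ℝ, z ∈ K → w - z ∈ K → ‖z‖ ≤ κ * ‖w‖ := by
  by_contra hcon
  push_neg at hcon
  choose z w hz hw hgt using fun m : ℕ => hcon (m + 1) (by positivity)
  have hz0 : ∀ m, z m ≠ 0 := by
    intro m hzm
    have := hgt m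
    rw [hzm, norm_zero] at this
    nlinarith [norm_nonneg (w m), this]
  set ζ : ℕ → Fin n → ℝ := fun m => ‖z m‖⁻¹ • z m with hζ
  set ω : ℕ → Fin n → ℝ := fun m => ‖z m‖⁻¹ • w m with hω
  have hζK : ∀ m, ζ m ∈ K := fun m => smul_mem hK (by positivity) (hz m)
  have hζn : ∀ m, ‖ζ m‖ = 1 := fun m => by
    rw [hζ]; simp [norm_smul, abs_of_nonneg, inv_mul_cancel₀ (norm_ne_zero_iff.mpr (hz0 m))]
  have hωζK : ∀ m, ω m - ζ m ∈ K := fun m => by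
    have : ω m - ζ m = ‖z m‖⁻¹ • (w m - z m) := by rw [hζ, hω, smul_sub]
    rw [this]; exact smul_mem hK (by positivity) (hw m)
  have hω0 : Tendsto ω atTop (nhds 0) := by
    have hb : ∀ m : ℕ, ‖ω m‖ ≤ 1 / (m + 1) := by
      intro m
      have hzpos : (0:ℝ) < ‖z m‖ := norm_pos_iff.mpr (hz0 m)
      have key : ‖w m‖ / ‖z m‖ ≤ 1 / (m + 1 : ℝ) := by
        rw [div_le_div_iff₀ hzpos (by positivity)]
        nlinarith [hgt m]
      calc ‖ω m‖ = ‖w m‖ / ‖z m‖ := by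
            rw [hω]
            simp only [norm_smul, Real.norm_eq_abs,
              abs_of_nonneg (inv_nonneg.mpr (le_of_lt hzpos))]
            rw [div_eq_mul_inv, mul_comm]
        _ ≤ 1 / (m + 1 : ℝ) := key
    have h0 : Tendsto (fun m : ℕ => 1 / ((m:ℝ) + 1)) atTop (nhds 0) :=
      tendsto_one_div_add_atTop_nhds_zero_nat
    exact squeeze_zero_norm hb h0
  obtain ⟨l, hl, φ, hφ, hconv⟩ :=
    (isCompact_sphere (0 : Fin n → ℝ) 1).tendsto_subseq (fun m => by
      simpa [mem_sphere_zero_iff_norm] using hζn m)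
  have hlK : l ∈ K := mem_of_tendsto hK hconv fun m => hζK (φ m)
  have hnegl : -l ∈ K := by
    have ht : Tendsto (fun m => ω (φ m) - ζ (φ m)) atTop (nhds (0 - l)) :=
      ((hω0.comp hφ.tendsto_atTop).sub hconv)
    rw [zero_sub] at ht
    exact mem_of_tendsto hK ht fun m => hωζK (φ m)
  have : l = 0 := pointed hK hlK hnegl
  rw [mem_sphere_zero_iff_norm] at hl
  rw [this, norm_zero] at hl
  norm_num at hl

theorem dual_exists (hK : IsProperCone K) :
    ∃ f : (Fin n → ℝ) →L[ℝ] ℝ, ∃ c : ℝ, 0 < c ∧ ∀ z ∈ K, c * ‖z‖ ≤ f z := by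
  classical
  set S := K ∩ Metric.sphere (0 : Fin n → ℝ) 1 with hSdef
  by_cases hS : S = ∅
  · refine ⟨0, 1, one_pos, fun z hz => ?_⟩
    have hz0 : z = 0 := by
      by_contra h0
      have : ‖z‖⁻¹ • z ∈ S := by
        refine ⟨smul_mem hK (by positivity) hz, ?_⟩
        rw [mem_sphere_zero_iff_norm]
        simp [norm_smul, abs_of_nonneg, inv_mul_cancel₀ (norm_ne_zero_iff.mpr h0)]
      rw [hS] at this
      exact this
    simp [hz0]
  · have hfx : ∀ x : Fin n → ℝ, x ∈ S →
        ∃ f : (Fin n → ℝ) →L[ℝ] ℝ, (∀ y ∈ K, 0 ≤ f y) ∧ 0 < f x := by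
      intro x hx
      have hxK : x ∈ K := hx.1
      have hx1 : ‖x‖ = 1 := mem_sphere_zero_iff_norm.mp hx.2
      have hx0 : x ≠ 0 := by intro e; rw [e, norm_zero] at hx1; norm_num at hx1
      have hnx : -x ∉ K := fun hc => hx0 (pointed hK hxK hc)
      obtain ⟨f, u, hfu, hKlt⟩ := geometric_hahn_banach_point_closed hK.2.1 hK.1 hnx
      have hu0 : u < 0 := by
        have := hKlt 0 (zero_mem hK)
        simpa using this
      have hfK : ∀ y ∈ K, 0 ≤ f y := by
        intro y hy
        by_contra hneg
        push_neg at hneg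
        have ht0 : 0 ≤ (u - 1) / f y := div_nonneg_of_nonpos (by linarith) hneg.le
        have hty : ((u - 1) / f y) • y ∈ K := smul_mem hK ht0 hy
        have h2 := hKlt _ hty
        rw [f.map_smul, smul_eq_mul, div_mul_cancel₀ _ (ne_of_lt hneg)] at h2
        linarith
      refine ⟨f, hfK, ?_⟩
      rw [map_neg] at hfu
      linarith
    choose! F hF1 hF2 using hfx
    have hcomp : IsCompact S := (isCompact_sphere (0 : Fin n → ℝ) 1).inter_left hK.1
    have hUopen : ∀ x ∈ S, IsOpen {y : Fin n → ℝ | 0 < F x y} := by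
      intro x _
      exact isOpen_lt continuous_const (F x).continuous
    have hcover : S ⊆ ⋃ x ∈ S, {y : Fin n → ℝ | 0 < F x y} := by
      intro y hy
      exact Set.mem_biUnion hy (hF2 y hy)
    obtain ⟨b, hbS, hbfin, hbcov⟩ := hcomp.elim_finite_subcover_image hUopen hcover
    classical
    set f : (Fin n → ℝ) →L[ℝ] ℝ := ∑ x ∈ hbfin.toFinset, F x with hfdef
    have hfapp : ∀ y, f y = ∑ x ∈ hbfin.toFinset, F x y := by
      intro y
      rw [hfdef]
      simp [ContinuousLinearMap.sum_apply]
    have hfK : ∀ y ∈ K, 0 ≤ f y := by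
      intro y hy
      rw [hfapp]
      exact Finset.sum_nonneg fun x hx => hF1 x (hbS (hbfin.mem_toFinset.mp hx)) y hy
    have hSne : S.Nonempty := Set.nonempty_iff_ne_empty.mpr hS
    obtain ⟨y₀, hy₀S, hy₀min⟩ := hcomp.exists_isMinOn hSne f.continuous.continuousOn
    have hc0 : 0 < f y₀ := by
      obtain ⟨x, hx, hx2⟩ := Set.mem_iUnion₂.mp (hbcov hy₀S)
      have hxS : x ∈ S := hbS hx
      have : F x y₀ ≤ f y₀ := by
        rw [hfapp]
        refine Finset.single_le_sum (f := fun x => F x y₀) ?_ (hbfin.mem_toFinset.mpr hx)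
        intro i hi
        exact hF1 i (hbS (hbfin.mem_toFinset.mp hi)) y₀ hy₀S.1
      exact lt_of_lt_of_le hx2 this
    refine ⟨f, f y₀, hc0, ?_⟩
    intro z hz
    rcases eq_or_ne z 0 with rfl | hz0
    · simp
    · have hzS : ‖z‖⁻¹ • z ∈ S := by
        refine ⟨smul_mem hK (by positivity) hz, ?_⟩
        rw [mem_sphere_zero_iff_norm]
        simp [norm_smul, abs_of_nonneg, inv_mul_cancel₀ (norm_ne_zero_iff.mpr hz0)]
      have h1 : f y₀ ≤ f (‖z‖⁻¹ • z) := hy₀min hzS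
      rw [f.map_smul, smul_eq_mul] at h1
      have hzpos : (0:ℝ) < ‖z‖ := norm_pos_iff.mpr hz0
      calc f y₀ * ‖z‖ ≤ (‖z‖⁻¹ * f z) * ‖z‖ := by nlinarith
        _ = f z := by field_simp

theorem int_bound (hK : IsProperCone K) :
    ∃ u : Fin n → ℝ, u ∈ K ∧ ∃ C : ℝ, 0 < C ∧ ∀ M : Matrix (Fin n) (Fin n) ℝ, KNonneg K M →
      ∀ w : Fin n → ℝ, ‖M.mulVec w‖ ≤ C * ‖M.mulVec u‖ * ‖w‖ := by
  obtain ⟨u, hu⟩ := hK.2.2.2.2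
  obtain ⟨ε, hε, hball⟩ := Metric.isOpen_iff.mp isOpen_interior u hu
  obtain ⟨κ, hκ, hmono⟩ := norm_mono hK
  have hballK : ∀ y : Fin n → ℝ, ‖y‖ ≤ ε / 2 → u + y ∈ K := by
    intro y hy
    have : u + y ∈ Metric.ball u ε := by
      rw [Metric.mem_ball, dist_eq_norm]
      simpa using lt_of_le_of_lt hy (by linarith)
    exact interior_subset (hball this)
  refine ⟨u, interior_subset hu, (2 * κ + 1) * (2 / ε), by positivity, ?_⟩
  intro M hM w
  rcases eq_or_ne w 0 with rfl | hw0
  · simp only [Matrix.mulVec_zero, norm_zero, mul_zero]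
    exact le_rfl
  · have hwpos : (0:ℝ) < ‖w‖ := norm_pos_iff.mpr hw0
    set y : Fin n → ℝ := (ε / 2 / ‖w‖) • w with hy
    have hyn : ‖y‖ = ε / 2 := by
      rw [hy, norm_smul, Real.norm_eq_abs, abs_of_nonneg (by positivity)]
      field_simp
    have h1 : M.mulVec (u + y) ∈ K := hM _ (hballK y hyn.le)
    have h2 : M.mulVec (u - y) ∈ K := by
      refine hM _ ?_
      have : u - y = u + (-y) := by ring
      rw [this]
      exact hballK (-y) (by rw [norm_neg, hyn])
    have h3 : (2:ℝ) • M.mulVec u - M.mulVec (u + y) = M.mulVec (u - y) := by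
      rw [Matrix.mulVec_add, Matrix.mulVec_sub]
      have : (2:ℝ) • M.mulVec u = M.mulVec u + M.mulVec u := two_smul ℝ _
      rw [this]; abel
    have h4 : ‖M.mulVec (u + y)‖ ≤ κ * ‖(2:ℝ) • M.mulVec u‖ := by
      refine hmono _ _ h1 ?_
      rw [h3]; exact h2
    have h5 : ‖M.mulVec y‖ ≤ (2 * κ + 1) * ‖M.mulVec u‖ := by
      have e1 : M.mulVec y = M.mulVec (u + y) - M.mulVec u := by
        rw [Matrix.mulVec_add]; abel
      have e2 : ‖(2:ℝ) • M.mulVec u‖ = 2 * ‖M.mulVec u‖ := by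
        rw [norm_smul]; simp
      rw [e1]
      calc ‖M.mulVec (u + y) - M.mulVec u‖ ≤ ‖M.mulVec (u + y)‖ + ‖M.mulVec u‖ :=
            norm_sub_le _ _
        _ ≤ κ * (2 * ‖M.mulVec u‖) + ‖M.mulVec u‖ := by
            rw [e2] at h4; linarith
        _ = (2 * κ + 1) * ‖M.mulVec u‖ := by ring
    have e3 : M.mulVec y = (ε / 2 / ‖w‖) • M.mulVec w := by
      rw [hy, Matrix.mulVec_smul]
    have e4 : ‖M.mulVec y‖ = (ε / 2 / ‖w‖) * ‖M.mulVec w‖ := by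
      rw [e3, norm_smul, Real.norm_eq_abs, abs_of_nonneg (by positivity)]
    have hε2 : (0:ℝ) < ε / 2 / ‖w‖ := by positivity
    rw [e4] at h5
    calc ‖M.mulVec w‖ = (ε / 2 / ‖w‖ * ‖M.mulVec w‖) * (2 / ε * ‖w‖) := by
          field_simp
      _ ≤ ((2 * κ + 1) * ‖M.mulVec u‖) * (2 / ε * ‖w‖) := by
          have : (0:ℝ) ≤ 2 / ε * ‖w‖ := by positivity
          nlinarith
      _ = (2 * κ + 1) * (2 / ε) * ‖M.mulVec u‖ * ‖w‖ := by ring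

/-! #### Spectral radius facts -/

/-- Complexification of a real matrix. -/
noncomputable def cx (M : Matrix (Fin n) (Fin n) ℝ) : Matrix (Fin n) (Fin n) ℂ :=
  M.map Complex.ofReal

theorem specRad_def (M : Matrix (Fin n) (Fin n) ℝ) :
    specRad M = sSup ((fun z : ℂ => ‖z‖) '' spectrum ℂ (cx M)) := rfl

theorem cx_hom (M : Matrix (Fin n) (Fin n) ℝ) :
    cx M = Complex.ofRealHom.mapMatrix M := rfl

theorem cx_mul (M N : Matrix (Fin n) (Fin n) ℝ) : cx (M * N) = cx M * cx N := by
  rw [cx_hom, cx_hom, cx_hom, _root_.map_mul]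

theorem cx_one : cx (1 : Matrix (Fin n) (Fin n) ℝ) = 1 := by
  rw [cx_hom, _root_.map_one]

theorem cx_pow (M : Matrix (Fin n) (Fin n) ℝ) (m : ℕ) : cx (M ^ m) = cx M ^ m := by
  rw [cx_hom, _root_.map_pow]; rfl

theorem cx_sub (M N : Matrix (Fin n) (Fin n) ℝ) : cx (M - N) = cx M - cx N := by
  rw [cx_hom, cx_hom, cx_hom, _root_.map_sub]

theorem specRad_nonneg (M : Matrix (Fin n) (Fin n) ℝ) : 0 ≤ specRad M := by
  rw [specRad_def]
  exact Real.sSup_nonneg (by rintro x ⟨μ, _, rfl⟩; exact norm_nonneg _)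

theorem specRad_bddAbove (M : Matrix (Fin n) (Fin n) ℝ) :
    BddAbove ((fun z : ℂ => ‖z‖) '' spectrum ℂ (cx M)) :=
  ((spectrum.isCompact (cx M)).image continuous_norm).bddAbove

theorem abs_le_specRad {M : Matrix (Fin n) (Fin n) ℝ} {μ : ℂ}
    (hμ : μ ∈ spectrum ℂ (cx M)) : ‖μ‖ ≤ specRad M :=
  le_csSup (specRad_bddAbove M) (Set.mem_image_of_mem _ hμ)

theorem specRad_mem (hn : 0 < n) (M : Matrix (Fin n) (Fin n) ℝ) :
    ∃ μ ∈ spectrum ℂ (cx M), ‖μ‖ = specRad M := by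
  haveI : Nonempty (Fin n) := Fin.pos_iff_nonempty.mp hn
  have hne : ((fun z : ℂ => ‖z‖) '' spectrum ℂ (cx M)).Nonempty :=
    (spectrum.nonempty (cx M)).image _
  have hcs : sSup ((fun z : ℂ => ‖z‖) '' spectrum ℂ (cx M)) ∈ (fun z : ℂ => ‖z‖) '' spectrum ℂ (cx M) :=
    ((spectrum.isCompact (cx M)).image continuous_norm).sSup_mem hne
  obtain ⟨μ, hμ, hμe⟩ := hcs
  exact ⟨μ, hμ, hμe⟩

theorem eig_exists (hn : 0 < n) (M : Matrix (Fin n) (Fin n) ℝ) :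
    ∃ (μ : ℂ) (v : Fin n → ℂ), v ≠ 0 ∧ (cx M).mulVec v = μ • v ∧
      ‖μ‖ = specRad M := by
  obtain ⟨μ, hμ, habs⟩ := specRad_mem hn M
  rw [spectrum.mem_iff] at hμ
  have hdet : (algebraMap ℂ (Matrix (Fin n) (Fin n) ℂ) μ - cx M).det = 0 := by
    by_contra hd
    exact hμ ((Matrix.isUnit_iff_isUnit_det _).mpr (isUnit_iff_ne_zero.mpr hd))
  obtain ⟨v, hv0, hv⟩ := (Matrix.exists_mulVec_eq_zero_iff).mpr hdet
  refine ⟨μ, v, hv0, ?_, habs⟩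
  have h1 : (algebraMap ℂ (Matrix (Fin n) (Fin n) ℂ) μ).mulVec v - (cx M).mulVec v = 0 := by
    rw [← Matrix.sub_mulVec, hv]
  have h2 : (algebraMap ℂ (Matrix (Fin n) (Fin n) ℂ) μ).mulVec v = μ • v := by
    rw [Algebra.algebraMap_eq_smul_one, Matrix.smul_mulVec, Matrix.one_mulVec]
  have h3 := sub_eq_zero.mp h1
  rw [h2] at h3
  exact h3.symm

theorem specRad_conj (M B C : Matrix (Fin n) (Fin n) ℝ) (h1 : B * C = 1) (h2 : C * B = 1) :
    specRad (B * M * C) = specRad M := by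
  have hspec : spectrum ℂ (cx (B * M * C)) = spectrum ℂ (cx M) := by
    have hc1 : cx B * cx C = 1 := by rw [← cx_mul, h1, cx_one]
    have hc2 : cx C * cx B = 1 := by rw [← cx_mul, h2, cx_one]
    have hub : IsUnit (cx B) := ⟨⟨cx B, cx C, hc1, hc2⟩, rfl⟩
    have huc : IsUnit (cx C) := ⟨⟨cx C, cx B, hc2, hc1⟩, rfl⟩
    ext μ
    have key : ∀ x : Matrix (Fin n) (Fin n) ℂ,
        algebraMap ℂ _ μ - cx B * x * cx C = cx B * (algebraMap ℂ _ μ - x) * cx C := by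
      intro x
      rw [mul_sub, sub_mul]
      congr 1
      rw [Algebra.algebraMap_eq_smul_one, mul_smul_comm, smul_mul_assoc, mul_one, hc1]
    constructor
    · intro hμ
      rw [spectrum.mem_iff] at hμ ⊢
      intro hx
      apply hμ
      rw [cx_mul, cx_mul, key]
      exact (hub.mul hx).mul huc
    · intro hμ
      rw [spectrum.mem_iff] at hμ ⊢
      intro hx
      apply hμ
      rw [cx_mul, cx_mul, key] at hx
      have := (huc.mul hx).mul hub
      have e : cx C * (cx B * (algebraMap ℂ _ μ - cx M) * cx C) * cx B
          = algebraMap ℂ _ μ - cx M := by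
        simp only [← mul_assoc]
        rw [hc2, one_mul, mul_assoc, hc2, mul_one]
      rwa [e] at this
  rw [specRad_def, specRad_def, hspec]

theorem cx_nnnorm (N : Matrix (Fin n) (Fin n) ℝ) : ‖cx N‖₊ = ‖N‖₊ := by
  rw [Matrix.linfty_opNNNorm_def, Matrix.linfty_opNNNorm_def]
  congr 1
  funext i
  congr 1
  funext j
  simp [cx, Matrix.map_apply]

theorem cx_norm (N : Matrix (Fin n) (Fin n) ℝ) : ‖cx N‖ = ‖N‖ := by
  rw [← coe_nnnorm, ← coe_nnnorm, cx_nnnorm]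

theorem specRad_pow_le (M : Matrix (Fin n) (Fin n) ℝ) {s : ℕ} (hs : 1 ≤ s) :
    specRad (M ^ s) ≤ specRad M ^ s := by
  rw [specRad_def, cx_pow]
  rcases Set.eq_empty_or_nonempty (spectrum ℂ (cx M ^ s)) with he | hne
  · rw [he, Set.image_empty, Real.sSup_empty]
    exact pow_nonneg (specRad_nonneg M) s
  · have hmap : spectrum ℂ (cx M ^ s) = (· ^ s) '' spectrum ℂ (cx M) := by
      have hd : 0 < (Polynomial.X ^ s : Polynomial ℂ).degree := by
        rw [Polynomial.degree_X_pow]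
        exact_mod_cast hs
      have := spectrum.map_polynomial_aeval_of_degree_pos (cx M)
        (Polynomial.X ^ s : Polynomial ℂ) hd
      simpa [Polynomial.aeval_X_pow, Polynomial.eval_pow, Polynomial.eval_X] using this
    apply csSup_le (hne.image _)
    rintro r ⟨ν, hν, rfl⟩
    rw [hmap] at hν
    obtain ⟨μ, hμ, rfl⟩ := hν
    simp only [norm_pow]
    exact pow_le_pow_left₀ (norm_nonneg _) (abs_le_specRad hμ) s

theorem unit_one_sub {M : Matrix (Fin n) (Fin n) ℝ} (h : specRad M < 1) :
    IsUnit (1 - M) := by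
  rw [Matrix.isUnit_iff_isUnit_det, isUnit_iff_ne_zero]
  intro hdet
  have hdc : (cx (1 - M)).det = 0 := by
    rw [cx_hom, ← RingHom.map_det, hdet, map_zero]
  have h1 : (1:ℂ) ∈ spectrum ℂ (cx M) := by
    rw [spectrum.mem_iff, _root_.map_one]
    intro hu
    rw [Matrix.isUnit_iff_isUnit_det, isUnit_iff_ne_zero] at hu
    apply hu
    rw [← cx_one (n := n), ← cx_sub]
    exact hdc
  have := abs_le_specRad h1
  rw [norm_one] at this
  linarith

theorem gelfand_ev (M : Matrix (Fin n) (Fin n) ℝ) {l : ℝ} (h : specRad M < l) :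
    ∀ᶠ m in atTop, ‖M ^ m‖ ≤ l ^ m := by
  have hl0 : 0 < l := (specRad_nonneg M).trans_lt h
  have hrad : spectralRadius ℂ (cx M) < ENNReal.ofReal l := by
    have h1 : spectralRadius ℂ (cx M) ≤ ENNReal.ofReal (specRad M) := by
      refine iSup₂_le fun k hk => ?_
      rw [← ENNReal.ofReal_coe_nnreal, coe_nnnorm]
      refine ENNReal.ofReal_le_ofReal ?_
      exact abs_le_specRad hk
    exact lt_of_le_of_lt h1 ((ENNReal.ofReal_lt_ofReal_iff hl0).mpr h)
  have htend := spectrum.pow_norm_pow_one_div_tendsto_nhds_spectralRadius (cx M)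
  have hev := htend.eventually_lt_const hrad
  filter_upwards [hev, eventually_ge_atTop 1] with m hm hm1
  have hmm : (m:ℝ) ≠ 0 := by positivity
  have h2 : ‖cx M ^ m‖ ^ (1 / (m:ℝ)) < l := by
    have := (ENNReal.ofReal_lt_ofReal_iff hl0).mp hm
    exact this
  have h3 : ‖cx M ^ m‖ < l ^ m := by
    have hb : (0:ℝ) ≤ ‖cx M ^ m‖ := norm_nonneg _
    have e1 : (‖cx M ^ m‖ ^ (1 / (m:ℝ))) ^ (m:ℕ) = ‖cx M ^ m‖ := by
      rw [← Real.rpow_natCast (‖cx M ^ m‖ ^ (1 / (m:ℝ))) m, ← Real.rpow_mul hb]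
      rw [one_div, inv_mul_cancel₀ hmm, Real.rpow_one]
    calc ‖cx M ^ m‖ = (‖cx M ^ m‖ ^ (1 / (m:ℝ))) ^ (m:ℕ) := e1.symm
      _ < l ^ m := by
          apply pow_lt_pow_left₀ h2 (Real.rpow_nonneg hb _)
          omega
  rw [← cx_pow, cx_norm] at h3
  exact h3.le

/-! #### Neumann series -/

noncomputable def mulVecCLM (x : Fin n → ℝ) : Matrix (Fin n) (Fin n) ℝ →L[ℝ] (Fin n → ℝ) :=
  LinearMap.toContinuousLinearMap
    { toFun := fun M : Matrix (Fin n) (Fin n) ℝ => M.mulVec x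
      map_add' := fun M N => Matrix.add_mulVec M N x
      map_smul' := fun c M => by simp [Matrix.smul_mulVec] }

@[simp] theorem mulVecCLM_apply (x : Fin n → ℝ) (M : Matrix (Fin n) (Fin n) ℝ) :
    mulVecCLM x M = M.mulVec x := rfl

theorem hasSum_mulVec {f : ℕ → Matrix (Fin n) (Fin n) ℝ} {S : Matrix (Fin n) (Fin n) ℝ}
    (hS : HasSum f S) (x : Fin n → ℝ) :
    HasSum (fun m => (f m).mulVec x) (S.mulVec x) := by
  simpa using (mulVecCLM x).hasSum hS

theorem kn_hasSum (hK : IsProperCone K) {f : ℕ → Matrix (Fin n) (Fin n) ℝ}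
    {S : Matrix (Fin n) (Fin n) ℝ} (hS : HasSum f S) (hf : ∀ m, KNonneg K (f m)) :
    KNonneg K S := by
  intro x hx
  exact mem_of_tendsto hK (hasSum_mulVec hS x).tendsto_sum_nat
    (fun m => sum_mem hK fun i _ => hf i x hx)

theorem resolvent (M : Matrix (Fin n) (Fin n) ℝ) {lam : ℝ} (h : specRad M < lam) :
    ∃ S : Matrix (Fin n) (Fin n) ℝ, HasSum (fun m : ℕ => (lam⁻¹) ^ (m+1) • M ^ m) S ∧
      (lam • (1 : Matrix (Fin n) (Fin n) ℝ) - M) * S = 1 ∧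
      S * (lam • (1 : Matrix (Fin n) (Fin n) ℝ) - M) = 1 := by
  have hlam : 0 < lam := (specRad_nonneg M).trans_lt h
  obtain ⟨l, hl1, hl2⟩ := exists_between h
  have hl0 : 0 ≤ l := (specRad_nonneg M).trans hl1.le
  have hsum : Summable (fun m : ℕ => (lam⁻¹) ^ (m+1) • M ^ m) := by
    apply Summable.of_norm_bounded_eventually_nat (g := fun m => lam⁻¹ * (l / lam) ^ m)
    · apply Summable.mul_left
      apply summable_geometric_of_lt_one (by positivity)
      rw [div_lt_one hlam]
      exact hl2
    · filter_upwards [gelfand_ev M hl1] with m hm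
      rw [norm_smul, Real.norm_eq_abs, abs_of_nonneg (by positivity)]
      calc (lam⁻¹) ^ (m+1) * ‖M ^ m‖ ≤ (lam⁻¹) ^ (m+1) * l ^ m := by
            apply mul_le_mul_of_nonneg_left hm (by positivity)
        _ = lam⁻¹ * (l / lam) ^ m := by
            rw [pow_succ, div_pow]
            ring
  obtain ⟨S, hS⟩ := hsum
  set g : ℕ → Matrix (Fin n) (Fin n) ℝ := fun m => (lam⁻¹) ^ m • M ^ m with hg
  have hco : ∀ m : ℕ, lam • ((lam⁻¹) ^ (m+1) • M ^ m) = g m := by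
    intro m
    rw [smul_smul, hg]
    congr 1
    rw [pow_succ', ← mul_assoc, mul_inv_cancel₀ (ne_of_gt hlam), one_mul]
  have hgsum : HasSum g (lam • S) := by
    have h1 := hS.const_smul lam
    simpa only [hco] using h1
  have hg0 : g 0 = (1 : Matrix (Fin n) (Fin n) ℝ) := by simp [hg]
  have h2 : HasSum (fun m => g (m + 1)) (lam • S - 1) := by
    rw [hasSum_nat_add_iff 1]
    simpa [hg0, Finset.sum_range_one, sub_add_cancel] using hgsum
  have h3 : HasSum (fun m => g m - g (m + 1)) 1 := by
    have h3' := hgsum.sub h2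
    have h4 : lam • S - (lam • S - 1) = (1 : Matrix (Fin n) (Fin n) ℝ) := by abel
    rwa [h4] at h3'
  have hsc : ∀ m : ℕ, lam * lam⁻¹ ^ (m+1) = lam⁻¹ ^ m := by
    intro m
    rw [pow_succ', ← mul_assoc, mul_inv_cancel₀ (ne_of_gt hlam), one_mul]
  have hterm : ∀ m : ℕ, (lam • (1 : Matrix (Fin n) (Fin n) ℝ) - M) * ((lam⁻¹) ^ (m+1) • M ^ m)
      = g m - g (m + 1) := by
    intro m
    rw [sub_mul, smul_mul_assoc, one_mul, mul_smul_comm, smul_smul, hsc, ← pow_succ', hg]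
  have hterm' : ∀ m : ℕ, ((lam⁻¹) ^ (m+1) • M ^ m) * (lam • (1 : Matrix (Fin n) (Fin n) ℝ) - M)
      = g m - g (m + 1) := by
    intro m
    rw [mul_sub, mul_smul_comm, mul_one, smul_smul, hsc, smul_mul_assoc, ← pow_succ, hg]
  have hleft : (lam • (1 : Matrix (Fin n) (Fin n) ℝ) - M) * S = 1 := by
    have h5 := hS.mul_left (lam • (1 : Matrix (Fin n) (Fin n) ℝ) - M)
    have h6 : HasSum (fun m => (lam • (1 : Matrix (Fin n) (Fin n) ℝ) - M)
        * ((lam⁻¹) ^ (m+1) • M ^ m)) 1 := by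
      simp only [hterm]
      exact h3
    exact h5.unique h6
  have hright : S * (lam • (1 : Matrix (Fin n) (Fin n) ℝ) - M) = 1 := by
    have h5 := hS.mul_right (lam • (1 : Matrix (Fin n) (Fin n) ℝ) - M)
    have h6 : HasSum (fun m => ((lam⁻¹) ^ (m+1) • M ^ m)
        * (lam • (1 : Matrix (Fin n) (Fin n) ℝ) - M)) 1 := by
      simp only [hterm']
      exact h3
    exact h5.unique h6
  exact ⟨S, hS, hleft, hright⟩

/-- Neumann series for `specRad < 1`. -/
theorem neumann (M : Matrix (Fin n) (Fin n) ℝ) (h : specRad M < 1) :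
    ∃ E : Matrix (Fin n) (Fin n) ℝ, HasSum (fun m : ℕ => M ^ m) E ∧
      (1 - M) * E = 1 ∧ E * (1 - M) = 1 := by
  obtain ⟨S, hS, hl, hr⟩ := resolvent M h
  have e1 : ∀ m : ℕ, ((1:ℝ)⁻¹) ^ (m+1) • M ^ m = M ^ m := by
    intro m; simp
  have e2 : (1:ℝ) • (1 : Matrix (Fin n) (Fin n) ℝ) - M = 1 - M := by rw [one_smul]
  refine ⟨S, ?_, ?_, ?_⟩
  · simpa only [e1] using hS
  · rw [← e2]; exact hl
  · rw [← e2]; exact hr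

/-! #### Collatz–Wielandt type lower bound -/

theorem sub_eig_le (hK : IsProperCone K) (S : Matrix (Fin n) (Fin n) ℝ)
    (hS : KNonneg K S) {x : Fin n → ℝ} (hx : x ∈ K) (hx0 : x ≠ 0) {α : ℝ}
    (h : S.mulVec x - α • x ∈ K) : α ≤ specRad S := by
  rcases le_or_gt α 0 with hα | hα
  · exact hα.trans (specRad_nonneg S)
  obtain ⟨f, c, hc, hf⟩ := dual_exists hK
  have hfK : ∀ z ∈ K, 0 ≤ f z := fun z hz =>
    le_trans (mul_nonneg hc.le (norm_nonneg z)) (hf z hz)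
  have hind : ∀ m : ℕ, (S ^ m).mulVec x - α ^ m • x ∈ K := by
    intro m
    induction m with
    | zero => simpa [Matrix.one_mulVec] using zero_mem hK
    | succ m ih =>
      have e : (S ^ (m+1)).mulVec x - α ^ (m+1) • x
          = S.mulVec ((S ^ m).mulVec x - α ^ m • x) + α ^ m • (S.mulVec x - α • x) := by
        rw [Matrix.mulVec_sub, Matrix.mulVec_smul, smul_sub, Matrix.mulVec_mulVec,
          ← pow_succ', smul_smul, ← pow_succ]
        abel
      rw [e]
      exact add_mem hK (kn_apply hS ih) (smul_mem hK (by positivity) h)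
  by_contra hcon
  push_neg at hcon
  set l := (specRad S + α) / 2 with hl
  have hl1 : specRad S < l := by rw [hl]; linarith
  have hl2 : l < α := by rw [hl]; linarith
  have hl0 : 0 < l := lt_of_le_of_lt (specRad_nonneg S) hl1
  have hfx : 0 < f x := lt_of_lt_of_le (mul_pos hc (norm_pos_iff.mpr hx0)) (hf x hx)
  have hml : ∀ m : ℕ, α ^ m * f x ≤ f ((S ^ m).mulVec x) := by
    intro m
    have h1 := hfK _ (hind m)
    rw [map_sub, f.map_smul, smul_eq_mul] at h1
    linarith
  have hub : ∀ᶠ m in atTop, f ((S ^ m).mulVec x) ≤ ‖f‖ * ‖x‖ * l ^ m := by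
    filter_upwards [gelfand_ev S hl1] with m hm
    calc f ((S ^ m).mulVec x) ≤ ‖f ((S ^ m).mulVec x)‖ :=
          (le_abs_self _).trans_eq (Real.norm_eq_abs _).symm
      _ ≤ ‖f‖ * ‖(S ^ m).mulVec x‖ := f.le_opNorm _
      _ ≤ ‖f‖ * (‖S ^ m‖ * ‖x‖) :=
          mul_le_mul_of_nonneg_left (Matrix.linfty_opNorm_mulVec _ _) (norm_nonneg f)
      _ ≤ ‖f‖ * (l ^ m * ‖x‖) :=
          mul_le_mul_of_nonneg_left
            (mul_le_mul_of_nonneg_right hm (norm_nonneg x)) (norm_nonneg f)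
      _ = ‖f‖ * ‖x‖ * l ^ m := by ring
  have hgt1 : 1 < α / l := (one_lt_div hl0).mpr hl2
  have htend := tendsto_pow_atTop_atTop_of_one_lt hgt1
  have hbig := htend.eventually_gt_atTop ((‖f‖ * ‖x‖ + 1) / f x)
  obtain ⟨m, hm1, hm2⟩ := (hub.and hbig).exists
  have hαm : α ^ m * f x ≤ ‖f‖ * ‖x‖ * l ^ m := (hml m).trans hm1
  have hlm : (0:ℝ) < l ^ m := by positivity
  rw [div_pow, div_lt_div_iff₀ hfx hlm] at hm2
  nlinarith

/-! #### Perron–Frobenius for proper cones -/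

theorem perron (hK : IsProperCone K) (hn : 0 < n) (T : Matrix (Fin n) (Fin n) ℝ)
    (hT : KNonneg K T) : ∃ x, x ∈ K ∧ x ≠ 0 ∧ T.mulVec x = specRad T • x := by
  classical
  set r := specRad T with hr
  have hr0 : 0 ≤ r := specRad_nonneg T
  obtain ⟨f, c, hc, hf⟩ := dual_exists hK
  obtain ⟨u, huK, C, hC, hCb⟩ := int_bound hK
  obtain ⟨μ, v, hv0, heig, habs⟩ := eig_exists hn T
  obtain ⟨j₀, hj₀⟩ := Function.ne_iff.mp hv0
  have hj₀' : v j₀ ≠ 0 := by simpa using hj₀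
  set a : Fin n → ℝ := fun k => (v k).re with ha
  set b : Fin n → ℝ := fun k => (v k).im with hb
  have hre : ∀ (N : Matrix (Fin n) (Fin n) ℝ) (j : Fin n),
      ((cx N).mulVec v j).re = N.mulVec a j ∧ ((cx N).mulVec v j).im = N.mulVec b j := by
    intro N j
    constructor
    · simp [cx, Matrix.mulVec, dotProduct, Matrix.map_apply, Complex.re_sum,
        Complex.mul_re, ha]
    · simp [cx, Matrix.mulVec, dotProduct, Matrix.map_apply, Complex.im_sum,
        Complex.mul_im, hb]
  have heigpow : ∀ m : ℕ, (cx (T ^ m)).mulVec v = (μ ^ m) • v := by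
    intro m
    rw [cx_pow]
    induction m with
    | zero => simp [Matrix.one_mulVec]
    | succ m ih =>
      rw [pow_succ, ← Matrix.mulVec_mulVec, heig, Matrix.mulVec_smul, ih, smul_smul,
        ← pow_succ']
  have hab : ∀ m : ℕ, r ^ m * ‖v j₀‖
      ≤ C * ‖(T ^ m).mulVec u‖ * (‖a‖ + ‖b‖) := by
    intro m
    have h1 : ‖(cx (T ^ m)).mulVec v j₀‖ = r ^ m * ‖v j₀‖ := by
      rw [heigpow m]
      simp only [Pi.smul_apply, smul_eq_mul, norm_mul, norm_pow, habs, ← hr]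
    have h2 : ‖(cx (T ^ m)).mulVec v j₀‖
        ≤ |(T ^ m).mulVec a j₀| + |(T ^ m).mulVec b j₀| := by
      have h := Complex.norm_le_abs_re_add_abs_im ((cx (T ^ m)).mulVec v j₀)
      rw [(hre (T ^ m) j₀).1, (hre (T ^ m) j₀).2] at h
      exact h
    have h3 : |(T ^ m).mulVec a j₀| ≤ C * ‖(T ^ m).mulVec u‖ * ‖a‖ := by
      have h4 := norm_le_pi_norm ((T ^ m).mulVec a) j₀
      rw [Real.norm_eq_abs] at h4
      exact h4.trans (hCb (T ^ m) (kn_pow hT m) a)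
    have h5 : |(T ^ m).mulVec b j₀| ≤ C * ‖(T ^ m).mulVec u‖ * ‖b‖ := by
      have h4 := norm_le_pi_norm ((T ^ m).mulVec b) j₀
      rw [Real.norm_eq_abs] at h4
      exact h4.trans (hCb (T ^ m) (kn_pow hT m) b)
    calc r ^ m * ‖v j₀‖ = ‖(cx (T ^ m)).mulVec v j₀‖ := h1.symm
      _ ≤ |(T ^ m).mulVec a j₀| + |(T ^ m).mulVec b j₀| := h2
      _ ≤ C * ‖(T ^ m).mulVec u‖ * ‖a‖ + C * ‖(T ^ m).mulVec u‖ * ‖b‖ := by linarith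
      _ = C * ‖(T ^ m).mulVec u‖ * (‖a‖ + ‖b‖) := by ring
  have habj : 0 < ‖v j₀‖ := norm_pos_iff.mpr hj₀'
  have habsum : 0 < ‖a‖ + ‖b‖ := by
    rcases lt_or_ge 0 (‖a‖ + ‖b‖) with h | h
    · exact h
    · exfalso
      have hna : ‖a‖ = 0 := le_antisymm (by linarith [norm_nonneg b]) (norm_nonneg a)
      have hnb : ‖b‖ = 0 := le_antisymm (by linarith [norm_nonneg a]) (norm_nonneg b)
      apply hj₀'
      have ha0 : a = 0 := norm_eq_zero.mp hna
      have hb0 : b = 0 := norm_eq_zero.mp hnb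
      exact Complex.ext (by simpa [ha] using congrFun ha0 j₀)
        (by simpa [hb] using congrFun hb0 j₀)
  set δ : ℝ := c * ‖v j₀‖ / (C * (‖a‖ + ‖b‖)) with hδ
  have hδ0 : 0 < δ := div_pos (mul_pos hc habj) (mul_pos hC habsum)
  have hkey : ∀ m : ℕ, δ * r ^ m ≤ f ((T ^ m).mulVec u) := by
    intro m
    have h1 := hf _ (kn_apply (kn_pow hT m) huK)
    have h2 := hab m
    have h3 : δ * r ^ m ≤ c * ‖(T ^ m).mulVec u‖ := by
      rw [hδ, div_mul_eq_mul_div, div_le_iff₀ (mul_pos hC habsum)]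
      calc c * ‖v j₀‖ * r ^ m = c * (r ^ m * ‖v j₀‖) := by ring
        _ ≤ c * (C * ‖(T ^ m).mulVec u‖ * (‖a‖ + ‖b‖)) :=
            mul_le_mul_of_nonneg_left h2 hc.le
        _ = c * ‖(T ^ m).mulVec u‖ * (C * (‖a‖ + ‖b‖)) := by ring
    linarith
  set lam : ℕ → ℝ := fun k => r + ((k:ℝ)+1)⁻¹ with hlam
  have hlam0 : ∀ k : ℕ, 0 < lam k := by
    intro k
    have : (0:ℝ) < ((k:ℝ)+1)⁻¹ := by positivity
    rw [hlam]
    dsimp only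
    linarith
  have hres : ∀ k : ℕ, specRad T < lam k := by
    intro k
    have : (0:ℝ) < ((k:ℝ)+1)⁻¹ := by positivity
    rw [hlam, ← hr]
    dsimp only
    linarith
  choose S hS hSl hSr using fun k : ℕ => resolvent T (hres k)
  set x : ℕ → Fin n → ℝ := fun k => (S k).mulVec u with hx
  have hxK : ∀ k, x k ∈ K := by
    intro k
    refine kn_hasSum hK (hS k) ?_ u huK
    intro m
    exact kn_smul hK (pow_nonneg (inv_nonneg.mpr (hlam0 k).le) _) (kn_pow hT m)
  have hfx : ∀ k : ℕ, δ * ((k:ℝ)+1) ≤ f (x k) := by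
    intro k
    have hsum1 : HasSum (fun m => f (((lam k)⁻¹ ^ (m+1) • T ^ m).mulVec u)) (f (x k)) := by
      simpa using f.hasSum (hasSum_mulVec (hS k) u)
    have hterm : ∀ m : ℕ, f (((lam k)⁻¹ ^ (m+1) • T ^ m).mulVec u)
        = (lam k)⁻¹ ^ (m+1) * f ((T ^ m).mulVec u) := by
      intro m
      rw [Matrix.smul_mulVec, f.map_smul, smul_eq_mul]
    have hsum2 : HasSum (fun m => (lam k)⁻¹ ^ (m+1) * f ((T ^ m).mulVec u)) (f (x k)) := by
      simpa only [hterm] using hsum1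
    have hratio : r * (lam k)⁻¹ < 1 := by
      rw [← div_eq_mul_inv, div_lt_one (hlam0 k)]
      exact hres k
    have hratio0 : 0 ≤ r * (lam k)⁻¹ := mul_nonneg hr0 (inv_nonneg.mpr (hlam0 k).le)
    have hgeom0 : HasSum (fun m : ℕ => (r * (lam k)⁻¹) ^ m) ((1 - r * (lam k)⁻¹)⁻¹) :=
      hasSum_geometric_of_lt_one hratio0 hratio
    have hgeom : HasSum (fun m : ℕ => δ * ((lam k)⁻¹ ^ (m+1) * r ^ m))
        (δ * ((k:ℝ)+1)) := by
      have h2 := (hgeom0.mul_left ((lam k)⁻¹)).mul_left δ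
      have e1 : (fun m : ℕ => δ * ((lam k)⁻¹ * (r * (lam k)⁻¹) ^ m))
          = fun m : ℕ => δ * ((lam k)⁻¹ ^ (m+1) * r ^ m) := by
        funext m
        rw [mul_pow]
        ring
      have e2 : δ * ((lam k)⁻¹ * (1 - r * (lam k)⁻¹)⁻¹) = δ * ((k:ℝ)+1) := by
        congr 1
        have hne : lam k ≠ 0 := (hlam0 k).ne'
        have hlr : lam k - r = ((k:ℝ)+1)⁻¹ := by rw [hlam]; dsimp only; ring
        have h6 : (lam k - r) * (lam k)⁻¹ = 1 - r * (lam k)⁻¹ := by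
          rw [sub_mul, mul_inv_cancel₀ hne]
        rw [← h6, hlr, mul_inv, inv_inv, inv_inv, mul_comm (((k:ℝ)+1)) (lam k), ← mul_assoc,
          inv_mul_cancel₀ hne, one_mul]
      rw [e1] at h2
      rw [← e2]
      exact h2
    have hle : ∀ m : ℕ, δ * ((lam k)⁻¹ ^ (m+1) * r ^ m)
        ≤ (lam k)⁻¹ ^ (m+1) * f ((T ^ m).mulVec u) := by
      intro m
      have h2 : (0:ℝ) ≤ (lam k)⁻¹ ^ (m+1) := pow_nonneg (inv_nonneg.mpr (hlam0 k).le) _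
      calc δ * ((lam k)⁻¹ ^ (m+1) * r ^ m) = (lam k)⁻¹ ^ (m+1) * (δ * r ^ m) := by ring
        _ ≤ _ := mul_le_mul_of_nonneg_left (hkey m) h2
    have h4 := Summable.tsum_le_tsum hle hgeom.summable hsum2.summable
    rwa [hgeom.tsum_eq, hsum2.tsum_eq] at h4
  have hfnorm : 0 < ‖f‖ := by
    rcases (norm_nonneg f).lt_or_eq with h | h
    · exact h
    · exfalso
      have hf0 : f = 0 := by
        rwa [eq_comm, norm_eq_zero] at h
      have h1 := hfx 0
      rw [hf0] at h1
      simp at h1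
      nlinarith
  have hxn : ∀ k : ℕ, δ * ((k:ℝ)+1) ≤ ‖f‖ * ‖x k‖ := by
    intro k
    calc δ * ((k:ℝ)+1) ≤ f (x k) := hfx k
      _ ≤ ‖f (x k)‖ := (le_abs_self _).trans_eq (Real.norm_eq_abs _).symm
      _ ≤ ‖f‖ * ‖x k‖ := f.le_opNorm (x k)
  have hxpos : ∀ k, 0 < ‖x k‖ := by
    intro k
    rcases (norm_nonneg (x k)).lt_or_eq with h | h
    · exact h
    · exfalso
      have h1 := hxn k
      rw [← h, mul_zero] at h1
      nlinarith
  set y : ℕ → Fin n → ℝ := fun k => ‖x k‖⁻¹ • x k with hy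
  have hy_sph : ∀ k, y k ∈ Metric.sphere (0 : Fin n → ℝ) 1 := by
    intro k
    rw [mem_sphere_zero_iff_norm, hy]
    dsimp only
    rw [norm_smul, Real.norm_eq_abs, abs_of_nonneg (inv_nonneg.mpr (norm_nonneg _)),
      inv_mul_cancel₀ (hxpos k).ne']
  have hyK : ∀ k, y k ∈ K := fun k => smul_mem hK (inv_nonneg.mpr (norm_nonneg _)) (hxK k)
  have hTx : ∀ k, T.mulVec (x k) = lam k • x k - u := by
    intro k
    have h1 := congrArg (fun M : Matrix (Fin n) (Fin n) ℝ => M.mulVec u) (hSl k)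
    rw [← Matrix.mulVec_mulVec, Matrix.one_mulVec, Matrix.sub_mulVec,
      Matrix.smul_mulVec, Matrix.one_mulVec] at h1
    have h2 := sub_eq_iff_eq_add.mp h1
    rw [h2]
    abel
  obtain ⟨z, hz_sph, φ, hφ, hconv⟩ :=
    (isCompact_sphere (0 : Fin n → ℝ) 1).tendsto_subseq hy_sph
  have hzK : z ∈ K := mem_of_tendsto hK hconv fun m => hyK (φ m)
  have hz1 : ‖z‖ = 1 := mem_sphere_zero_iff_norm.mp hz_sph
  have hz0 : z ≠ 0 := by intro e; rw [e, norm_zero] at hz1; norm_num at hz1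
  have hinv0 : Tendsto (fun k => ‖x k‖⁻¹) atTop (nhds 0) := by
    have hb : ∀ k : ℕ, ‖x k‖⁻¹ ≤ (‖f‖/δ) * ((k:ℝ)+1)⁻¹ := by
      intro k
      have h1 : δ * ((k:ℝ)+1) / ‖f‖ ≤ ‖x k‖ := by
        rw [div_le_iff₀ hfnorm]
        calc δ * ((k:ℝ)+1) ≤ ‖f‖ * ‖x k‖ := hxn k
          _ = ‖x k‖ * ‖f‖ := mul_comm _ _
      have h2 : (0:ℝ) < δ * ((k:ℝ)+1) / ‖f‖ := by positivity
      calc ‖x k‖⁻¹ ≤ (δ * ((k:ℝ)+1) / ‖f‖)⁻¹ := by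
            exact inv_anti₀ h2 h1
        _ = (‖f‖/δ) * ((k:ℝ)+1)⁻¹ := by
            field_simp
      
    have h0 : Tendsto (fun k : ℕ => (‖f‖/δ) * ((k:ℝ)+1)⁻¹) atTop (nhds 0) := by
      have h1 := tendsto_one_div_add_atTop_nhds_zero_nat.const_mul (‖f‖/δ)
      simpa [one_div] using h1
    exact squeeze_zero (fun k => inv_nonneg.mpr (norm_nonneg _)) hb h0
  have hlamt : Tendsto (fun k : ℕ => lam k) atTop (nhds r) := by
    have h1 : Tendsto (fun k : ℕ => 1 / ((k:ℝ) + 1)) atTop (nhds 0) :=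
      tendsto_one_div_add_atTop_nhds_zero_nat
    have h2 := (tendsto_const_nhds (x := r) (f := (atTop : Filter ℕ))).add h1
    rw [add_zero] at h2
    refine h2.congr ?_
    intro k
    rw [hlam]
    dsimp only
    rw [one_div]
  have hTy : ∀ k, T.mulVec (y k) = lam k • y k - ‖x k‖⁻¹ • u := by
    intro k
    rw [hy]
    dsimp only
    rw [Matrix.mulVec_smul, hTx k, smul_sub, smul_smul, mul_comm, ← smul_smul]
  have hconvT : Tendsto (fun k => T.mulVec (y (φ k))) atTop (nhds (T.mulVec z)) := by
    have hcont : Continuous fun w : Fin n → ℝ => T.mulVec w :=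
      (Matrix.mulVecLin T).continuous_of_finiteDimensional
    exact (hcont.tendsto z).comp hconv
  have hconvR : Tendsto (fun k => lam (φ k) • y (φ k) - ‖x (φ k)‖⁻¹ • u) atTop
      (nhds (r • z)) := by
    have h1 : Tendsto (fun k => lam (φ k)) atTop (nhds r) := hlamt.comp hφ.tendsto_atTop
    have h2 : Tendsto (fun k => ‖x (φ k)‖⁻¹) atTop (nhds 0) := hinv0.comp hφ.tendsto_atTop
    have h3 := (h1.smul hconv).sub (h2.smul_const u)
    simpa using h3
  have heqfun : (fun k => T.mulVec (y (φ k)))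
      = fun k => lam (φ k) • y (φ k) - ‖x (φ k)‖⁻¹ • u := funext fun k => hTy (φ k)
  rw [heqfun] at hconvT
  exact ⟨z, hzK, hz0, tendsto_nhds_unique hconvT hconvR⟩

/-! #### Convergence of splittings -/

theorem conv_lt_one (hK : IsProperCone K) (hn : 0 < n) {A Q : Matrix (Fin n) (Fin n) ℝ}
    (hAu : IsUnit A) (hAi : KNonneg K A⁻¹) (hQ : KNonneg K Q) (hQu : IsUnit Q)
    (hW : KNonneg K (1 - A * Q)) : specRad (1 - A * Q) < 1 := by
  obtain ⟨x, hxK, hx0, heig⟩ := perron hK hn _ hW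
  set r := specRad (1 - A * Q) with hr
  by_contra hcon
  push_neg at hcon
  have detA := (Matrix.isUnit_iff_isUnit_det A).mp hAu
  have detQ := (Matrix.isUnit_iff_isUnit_det Q).mp hQu
  have h1 : (A * Q).mulVec x = (1 - r) • x := by
    have e : (1 - A * Q).mulVec x = x - (A * Q).mulVec x := by
      rw [Matrix.sub_mulVec, Matrix.one_mulVec]
    rw [e] at heig
    have h3 : (A * Q).mulVec x = x - r • x := by
      rw [← heig]; abel
    rw [h3, sub_smul, one_smul]
  have h2 : Q.mulVec x = (1 - r) • A⁻¹.mulVec x := by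
    have e : Q = A⁻¹ * (A * Q) := by
      rw [← mul_assoc, Matrix.nonsing_inv_mul A detA, one_mul]
    rw [e, ← Matrix.mulVec_mulVec, h1, Matrix.mulVec_smul]
  have h3 : -(Q.mulVec x) ∈ K := by
    rw [h2, ← neg_smul]
    exact smul_mem hK (by linarith) (hAi x hxK)
  have h4 : Q.mulVec x = 0 := pointed hK (hQ x hxK) h3
  have h5 : x = 0 := by
    have e : (Q⁻¹ * Q).mulVec x = Q⁻¹.mulVec (Q.mulVec x) := (Matrix.mulVec_mulVec _ _ _).symm
    rw [Matrix.nonsing_inv_mul Q detQ, Matrix.one_mulVec, h4, Matrix.mulVec_zero] at e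
    exact e
  exact hx0 h5

/-! #### Splitting identities -/

theorem one_sub_mul_geom (H : Matrix (Fin n) (Fin n) ℝ) (s : ℕ) :
    (1 - H) * ∑ j ∈ Finset.range s, H ^ j = 1 - H ^ s := by
  induction s with
  | zero => simp
  | succ s ih =>
    rw [Finset.sum_range_succ, mul_add, ih, sub_mul, one_mul, ← pow_succ']
    abel

theorem geom_mul_one_sub (X : Matrix (Fin n) (Fin n) ℝ) (s : ℕ) :
    (∑ j ∈ Finset.range s, X ^ j) * (1 - X) = 1 - X ^ s := by
  induction s with
  | zero => simp
  | succ s ih =>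
    rw [Finset.sum_range_succ, add_mul, ih, mul_sub, mul_one, ← pow_succ]
    abel

theorem pow_semiconj (F G : Matrix (Fin n) (Fin n) ℝ) (j : ℕ) :
    F⁻¹ * (G * F⁻¹) ^ j = (F⁻¹ * G) ^ j * F⁻¹ := by
  have h : SemiconjBy F⁻¹ (G * F⁻¹) (F⁻¹ * G) := (mul_assoc F⁻¹ G F⁻¹).symm
  exact h.pow_right j

theorem Q_eq (F G : Matrix (Fin n) (Fin n) ℝ) (s : ℕ) :
    twoStageQ F G s = F⁻¹ * ∑ j ∈ Finset.range s, (G * F⁻¹) ^ j := by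
  rw [twoStageQ, Finset.sum_mul, Finset.mul_sum]
  exact Finset.sum_congr rfl fun j _ => (pow_semiconj F G j).symm

theorem side_idQ {U F G : Matrix (Fin n) (Fin n) ℝ} (hU : U = F - G) (hFu : IsUnit F)
    (hUu : IsUnit U) (s : ℕ) :
    twoStageQ F G s = U⁻¹ * (1 - (G * F⁻¹) ^ s) := by
  have detF := (Matrix.isUnit_iff_isUnit_det F).mp hFu
  have detU := (Matrix.isUnit_iff_isUnit_det U).mp hUu
  have hUF : U * F⁻¹ = 1 - G * F⁻¹ := by
    rw [hU, sub_mul, Matrix.mul_nonsing_inv F detF]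
  have h1 : U⁻¹ * (1 - (G * F⁻¹) ^ s)
      = U⁻¹ * ((1 - G * F⁻¹) * ∑ j ∈ Finset.range s, (G * F⁻¹) ^ j) := by
    rw [one_sub_mul_geom]
  rw [h1, ← hUF, ← mul_assoc, ← mul_assoc, Matrix.nonsing_inv_mul U detU, one_mul, Q_eq]

theorem side_T {A U V F G : Matrix (Fin n) (Fin n) ℝ} (hA : A = U - V) (hU : U = F - G)
    (hFu : IsUnit F) (s : ℕ) :
    twoStageT F G V s = 1 - twoStageQ F G s * A := by
  have detF := (Matrix.isUnit_iff_isUnit_det F).mp hFu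
  have hFU : F⁻¹ * U = 1 - F⁻¹ * G := by
    rw [hU, mul_sub, Matrix.nonsing_inv_mul F detF]
  have hQU : ((∑ j ∈ Finset.range s, (F⁻¹ * G) ^ j) * F⁻¹) * U = 1 - (F⁻¹ * G) ^ s := by
    rw [mul_assoc, hFU, geom_mul_one_sub]
  rw [twoStageT, twoStageQ, hA, mul_sub, hQU, mul_assoc]
  abel

theorem side_W {A U V F G : Matrix (Fin n) (Fin n) ℝ} (hA : A = U - V) (hU : U = F - G)
    (hFu : IsUnit F) (hUu : IsUnit U) (s : ℕ) :
    1 - A * twoStageQ F G s = (G * F⁻¹) ^ s + V * twoStageQ F G s := by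
  have detU := (Matrix.isUnit_iff_isUnit_det U).mp hUu
  have hQ := side_idQ hU hFu hUu s
  have hUQ : U * twoStageQ F G s = 1 - (G * F⁻¹) ^ s := by
    rw [hQ, ← mul_assoc, Matrix.mul_nonsing_inv U detU, one_mul]
  rw [hA, sub_mul, hUQ]
  abel

end KAux

open KAux in
theorem stmt_13 {n : ℕ} (K : Set (Fin n → ℝ)) (hK : IsProperCone K)
    (A U V F G F' G' : Matrix (Fin n) (Fin n) ℝ)
    (hmono : KMonotone K A)
    (houter : KRegularSplitting K A U V)
    (h₁ : KWeakRegularSplittingII K U F G)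
    (h₂ : KWeakRegularSplittingII K U F' G')
    (hc₁ : V * F⁻¹ * G = G * F⁻¹ * V)
    (hc₂ : V * F'⁻¹ * G' = G' * F'⁻¹ * V)
    (s : ℕ) (hs : 1 ≤ s)
    (hge : KNonneg K (G' * F'⁻¹ - G * F⁻¹))
    (hTP : KNonneg K (twoStageThat F G V s * (twoStageQ F G s)⁻¹)) :
    specRad (twoStageT F G V s) ≤ specRad (twoStageT F' G' V s) ∧
    specRad (twoStageT F' G' V s) < 1 := by
  classical
  rcases Nat.eq_zero_or_pos n with hn0 | hn
  · subst hn0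
    have hempty : ∀ M : Matrix (Fin 0) (Fin 0) ℝ, specRad M = 0 := by
      intro M
      have : spectrum ℂ (M.map Complex.ofReal) = ∅ := by
        ext μ
        simp only [spectrum.mem_iff, Set.mem_empty_iff_false, iff_false, not_not]
        exact isUnit_of_subsingleton _
      rw [specRad, this, Set.image_empty, Real.sSup_empty]
    rw [hempty, hempty]
    norm_num
  · obtain ⟨hAu, hAi⟩ := hmono
    obtain ⟨hA, hUu, hUi, hV⟩ := houter
    obtain ⟨hU1, hFu, hFi, hGF⟩ := h₁
    obtain ⟨hU2, hF'u, hF'i, hG'F'⟩ := h₂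
    have detA := (Matrix.isUnit_iff_isUnit_det A).mp hAu
    have detU := (Matrix.isUnit_iff_isUnit_det U).mp hUu
    have detF := (Matrix.isUnit_iff_isUnit_det F).mp hFu
    have detF' := (Matrix.isUnit_iff_isUnit_det F').mp hF'u
    have hFui : IsUnit (F⁻¹) :=
      ⟨⟨F⁻¹, F, Matrix.nonsing_inv_mul F detF, Matrix.mul_nonsing_inv F detF⟩, rfl⟩
    have hF'ui : IsUnit (F'⁻¹) :=
      ⟨⟨F'⁻¹, F', Matrix.nonsing_inv_mul F' detF', Matrix.mul_nonsing_inv F' detF'⟩, rfl⟩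
    have hUui : IsUnit (U⁻¹) :=
      ⟨⟨U⁻¹, U, Matrix.nonsing_inv_mul U detU, Matrix.mul_nonsing_inv U detU⟩, rfl⟩
    -- convergence of the inner splittings
    have hWU : (1 : Matrix (Fin n) (Fin n) ℝ) - U * F⁻¹ = G * F⁻¹ := by
      rw [hU1, sub_mul, Matrix.mul_nonsing_inv F detF]
      abel
    have hWU' : (1 : Matrix (Fin n) (Fin n) ℝ) - U * F'⁻¹ = G' * F'⁻¹ := by
      rw [hU2, sub_mul, Matrix.mul_nonsing_inv F' detF']
      abel
    have hHspec : specRad (G * F⁻¹) < 1 := by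
      have h := conv_lt_one hK hn hUu hUi hFi hFui (by rw [hWU]; exact hGF)
      rwa [hWU] at h
    have hH'spec : specRad (G' * F'⁻¹) < 1 := by
      have h := conv_lt_one hK hn hUu hUi hF'i hF'ui (by rw [hWU']; exact hG'F')
      rwa [hWU'] at h
    have hs0 : s ≠ 0 := by omega
    have hHs : specRad ((G * F⁻¹) ^ s) < 1 :=
      lt_of_le_of_lt (specRad_pow_le _ hs) (pow_lt_one₀ (specRad_nonneg _) hHspec hs0)
    have hH's : specRad ((G' * F'⁻¹) ^ s) < 1 :=
      lt_of_le_of_lt (specRad_pow_le _ hs) (pow_lt_one₀ (specRad_nonneg _) hH'spec hs0)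
    have hu1 : IsUnit (1 - (G * F⁻¹) ^ s) := unit_one_sub hHs
    have hu1' : IsUnit (1 - (G' * F'⁻¹) ^ s) := unit_one_sub hH's
    -- Q facts
    have hQid := side_idQ hU1 hFu hUu s
    have hQ'id := side_idQ hU2 hF'u hUu s
    have hQkn : KNonneg K (twoStageQ F G s) := by
      rw [Q_eq]
      exact kn_mul hFi (kn_sum hK fun j _ => kn_pow hGF j)
    have hQ'kn : KNonneg K (twoStageQ F' G' s) := by
      rw [Q_eq]
      exact kn_mul hF'i (kn_sum hK fun j _ => kn_pow hG'F' j)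
    have hQu : IsUnit (twoStageQ F G s) := by
      rw [hQid]; exact hUui.mul hu1
    have hQ'u : IsUnit (twoStageQ F' G' s) := by
      rw [hQ'id]; exact hUui.mul hu1'
    -- W facts
    have hWid := side_W hA hU1 hFu hUu s
    have hW'id := side_W hA hU2 hF'u hUu s
    have hWkn : KNonneg K (1 - A * twoStageQ F G s) := by
      rw [hWid]
      exact kn_add hK (kn_pow hGF s) (kn_mul hV hQkn)
    have hW'kn : KNonneg K (1 - A * twoStageQ F' G' s) := by
      rw [hW'id]
      exact kn_add hK (kn_pow hG'F' s) (kn_mul hV hQ'kn)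
    have hrW : specRad (1 - A * twoStageQ F G s) < 1 := conv_lt_one hK hn hAu hAi hQkn hQu hWkn
    have hrW' : specRad (1 - A * twoStageQ F' G' s) < 1 :=
      conv_lt_one hK hn hAu hAi hQ'kn hQ'u hW'kn
    -- similarity
    have hconj : specRad (twoStageT F G V s) = specRad (1 - A * twoStageQ F G s) := by
      have e : A⁻¹ * (1 - A * twoStageQ F G s) * A = 1 - twoStageQ F G s * A := by
        rw [mul_sub, mul_one, sub_mul, ← mul_assoc A⁻¹ A (twoStageQ F G s),
          Matrix.nonsing_inv_mul A detA, one_mul]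
      rw [side_T hA hU1 hFu s, ← e]
      exact specRad_conj _ _ _ (Matrix.nonsing_inv_mul A detA) (Matrix.mul_nonsing_inv A detA)
    have hconj' : specRad (twoStageT F' G' V s) = specRad (1 - A * twoStageQ F' G' s) := by
      have e : A⁻¹ * (1 - A * twoStageQ F' G' s) * A = 1 - twoStageQ F' G' s * A := by
        rw [mul_sub, mul_one, sub_mul, ← mul_assoc A⁻¹ A (twoStageQ F' G' s),
          Matrix.nonsing_inv_mul A detA, one_mul]
      rw [side_T hA hU2 hF'u s, ← e]
      exact specRad_conj _ _ _ (Matrix.nonsing_inv_mul A detA) (Matrix.mul_nonsing_inv A detA)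
    have conc2 : specRad (twoStageT F' G' V s) < 1 := by rw [hconj']; exact hrW'
    refine ⟨?_, conc2⟩
    rw [hconj, hconj']
    rcases eq_or_lt_of_le (specRad_nonneg (1 - A * twoStageQ F G s)) with hr00 | hrpos
    · rw [← hr00]; exact specRad_nonneg _
    -- Neumann series
    obtain ⟨E, hE, hEl, hEr⟩ := neumann _ hrW
    obtain ⟨E', hE', hE'l, hE'r⟩ := neumann _ hrW'
    obtain ⟨E₂, hE₂, hE₂l, hE₂r⟩ := neumann _ hH's
    obtain ⟨x, hxK, hx0, heig⟩ := perron hK hn _ hWkn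
    have h1r : (0:ℝ) < 1 - specRad (1 - A * twoStageQ F G s) := by linarith
    have hWm : ∀ m : ℕ, ((1 - A * twoStageQ F G s) ^ m).mulVec x
        = specRad (1 - A * twoStageQ F G s) ^ m • x := by
      intro m
      induction m with
      | zero => simp [Matrix.one_mulVec]
      | succ m ih =>
        rw [pow_succ, ← Matrix.mulVec_mulVec, heig, Matrix.mulVec_smul, ih, smul_smul,
          ← pow_succ']
    have hEx : E.mulVec x = (1 - specRad (1 - A * twoStageQ F G s))⁻¹ • x := by
      have h1 := hasSum_mulVec hE x
      simp only [hWm] at h1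
      have h2 : HasSum (fun m : ℕ => specRad (1 - A * twoStageQ F G s) ^ m • x)
          ((1 - specRad (1 - A * twoStageQ F G s))⁻¹ • x) :=
        (hasSum_geometric_of_lt_one (specRad_nonneg _) hrW).smul_const x
      exact h1.unique h2
    -- N' := E' - 1
    have hWE' : (1 - A * twoStageQ F' G' s) * E' = E' - 1 := by
      have h0 := hE'l
      rw [sub_mul, one_mul] at h0
      rw [eq_sub_iff_add_eq]
      calc (1 - A * twoStageQ F' G' s) * E' + 1
          = (1 - A * twoStageQ F' G' s) * E'
            + (E' - (1 - A * twoStageQ F' G' s) * E') := by rw [h0]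
        _ = E' := by abel
    have hN'sum : HasSum (fun m : ℕ => (1 - A * twoStageQ F' G' s) ^ (m+1)) (E' - 1) := by
      rw [hasSum_nat_add_iff 1]
      simpa [Finset.sum_range_one] using hE'
    have hN'kn : KNonneg K (E' - 1) := kn_hasSum hK hN'sum fun m => kn_pow hW'kn (m+1)
    -- difference identity
    have hQsub : twoStageQ F G s - twoStageQ F' G' s
        = U⁻¹ * ((G' * F'⁻¹) ^ s - (G * F⁻¹) ^ s) := by
      rw [hQid, hQ'id, ← mul_sub]
      congr 1
      abel
    have hWsub : (1 - A * twoStageQ F' G' s) - (1 - A * twoStageQ F G s)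
        = A * (U⁻¹ * ((G' * F'⁻¹) ^ s - (G * F⁻¹) ^ s)) := by
      rw [← hQsub, mul_sub]
      abel
    have hEE' : E' - E = E' * ((1 - A * twoStageQ F' G' s) - (1 - A * twoStageQ F G s)) * E := by
      have e1 : E' * ((1 - (1 - A * twoStageQ F G s)) * E) = E' := by rw [hEl, mul_one]
      have e2 : (E' * (1 - (1 - A * twoStageQ F' G' s))) * E = E := by rw [hE'r, one_mul]
      calc E' - E = E' * ((1 - (1 - A * twoStageQ F G s)) * E)
            - (E' * (1 - (1 - A * twoStageQ F' G' s))) * E := by rw [e1, e2]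
        _ = E' * ((1 - A * twoStageQ F' G' s) - (1 - A * twoStageQ F G s)) * E := by
            noncomm_ring
    have hE'AU : E' * A * U⁻¹ * (1 - (G' * F'⁻¹) ^ s) = 1 := by
      have h9 : A * (U⁻¹ * (1 - (G' * F'⁻¹) ^ s)) = 1 - (1 - A * twoStageQ F' G' s) := by
        rw [← hQ'id]
        abel
      calc E' * A * U⁻¹ * (1 - (G' * F'⁻¹) ^ s)
          = E' * (A * (U⁻¹ * (1 - (G' * F'⁻¹) ^ s))) := by simp only [mul_assoc]
        _ = E' * (1 - (1 - A * twoStageQ F' G' s)) := by rw [h9]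
        _ = 1 := hE'r
    have hE'AUeq : E' * A * U⁻¹ = E₂ := by
      calc E' * A * U⁻¹
          = E' * A * U⁻¹ * ((1 - (G' * F'⁻¹) ^ s) * E₂) := by rw [hE₂l, mul_one]
        _ = (E' * A * U⁻¹ * (1 - (G' * F'⁻¹) ^ s)) * E₂ := by simp only [← mul_assoc]
        _ = E₂ := by rw [hE'AU, one_mul]
    have hkeyM : E' - E = E₂ * ((G' * F'⁻¹) ^ s - (G * F⁻¹) ^ s) * E := by
      rw [hEE', hWsub, ← hE'AUeq]
      simp only [mul_assoc]
    have hDkn : KNonneg K ((G' * F'⁻¹) ^ s - (G * F⁻¹) ^ s) := kn_powSub hK hGF hge s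
    have hE₂kn : KNonneg K E₂ := kn_hasSum hK hE₂ fun m => kn_pow (kn_pow hG'F' s) m
    have hEEx : (E' - E).mulVec x ∈ K := by
      rw [hkeyM, ← Matrix.mulVec_mulVec, ← Matrix.mulVec_mulVec, hEx]
      refine kn_apply hE₂kn (kn_apply hDkn (smul_mem hK ?_ hxK))
      exact inv_nonneg.mpr (by linarith)
    have hγ0 : 0 < specRad (1 - A * twoStageQ F G s)
        / (1 - specRad (1 - A * twoStageQ F G s)) := div_pos hrpos h1r
    have hNx : (E - 1).mulVec x
        = (specRad (1 - A * twoStageQ F G s)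
          / (1 - specRad (1 - A * twoStageQ F G s))) • x := by
      rw [Matrix.sub_mulVec, hEx, Matrix.one_mulVec]
      nth_rewrite 2 [← one_smul ℝ x]
      rw [← sub_smul]
      congr 1
      field_simp
      ring
    have hsub : (E' - 1).mulVec x
        - (specRad (1 - A * twoStageQ F G s)
          / (1 - specRad (1 - A * twoStageQ F G s))) • x ∈ K := by
      have e : (E' - 1).mulVec x
          - (specRad (1 - A * twoStageQ F G s)
            / (1 - specRad (1 - A * twoStageQ F G s))) • x
          = (E' - E).mulVec x := by
        rw [← hNx, Matrix.sub_mulVec, Matrix.sub_mulVec, Matrix.sub_mulVec]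
        abel
      rw [e]
      exact hEEx
    have hβ := sub_eig_le hK _ hN'kn hxK hx0 hsub
    obtain ⟨w, hwK, hw0, hNw⟩ := perron hK hn _ hN'kn
    have hβ0 : 0 < specRad (E' - 1) := lt_of_lt_of_le hγ0 hβ
    have h1β : (0:ℝ) < 1 + specRad (E' - 1) := by linarith
    have hW'w : (1 - A * twoStageQ F' G' s).mulVec w
        = (specRad (E' - 1) / (1 + specRad (E' - 1))) • w := by
      have hwid : (1 - A * twoStageQ F' G' s) + (1 - A * twoStageQ F' G' s) * (E' - 1)
          = E' - 1 := by
        rw [mul_sub, mul_one, hWE']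
        abel
      have h1 := congrArg (fun M : Matrix (Fin n) (Fin n) ℝ => M.mulVec w) hwid
      rw [Matrix.add_mulVec, ← Matrix.mulVec_mulVec, hNw, Matrix.mulVec_smul] at h1
      have h2 : (1 + specRad (E' - 1)) • (1 - A * twoStageQ F' G' s).mulVec w
          = specRad (E' - 1) • w := by
        rw [add_smul, one_smul]
        exact h1
      have h3 := congrArg (fun v : Fin n → ℝ => (1 + specRad (E' - 1))⁻¹ • v) h2
      rw [smul_smul, inv_mul_cancel₀ h1β.ne', one_smul, smul_smul] at h3
      rw [h3, div_eq_inv_mul]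
    have hfin : specRad (E' - 1) / (1 + specRad (E' - 1))
        ≤ specRad (1 - A * twoStageQ F' G' s) := by
      refine sub_eig_le hK _ hW'kn hwK hw0 ?_
      rw [hW'w, sub_self]
      exact zero_mem hK
    set r := specRad (1 - A * twoStageQ F G s) with hrdef
    set β := specRad (E' - 1) with hβdef
    have e5 : 1 + r / (1 - r) = (1 - r)⁻¹ := by
      field_simp
      ring
    have hrγ : r = (r / (1 - r)) / (1 + r / (1 - r)) := by
      rw [e5, div_eq_mul_inv (r / (1 - r)), inv_inv, div_eq_mul_inv, mul_assoc,
        inv_mul_cancel₀ h1r.ne', mul_one]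
    have hmon : r / (1 - r) / (1 + r / (1 - r)) ≤ β / (1 + β) := by
      rw [div_le_div_iff₀ (by linarith : (0:ℝ) < 1 + r / (1 - r)) h1β]
      nlinarith
    calc r = (r / (1 - r)) / (1 + r / (1 - r)) := hrγ
      _ ≤ β / (1 + β) := hmon
      _ ≤ specRad (1 - A * twoStageQ F' G' s) := hfin
end

section
/- (Monotone convergence theorem) Let A ∈ ℝ^{n×n} be K-nonnegative (A ≥_K 0) and K-monotone, let A = U − V be a K-regular splitting and U = F − G a K-weak regular splitting of type II with V F⁻¹ G = G F⁻¹ V, let s ≥ 1 be an integer, and let b ∈ ℝ^n. Suppose x₀, y₀ ∈ ℝ^n satisfy x₁ ≥_K x₀, y₀ ≥_K y₁, and y₀ ≥_K A⁻¹b ≥_K x₀, where the sequences are generated by x_{k+1} = T_s x_k + Q_s b and y_{k+1} = T_s y_k + Q_s b. Then: (i) y_k ≥_K y_{k+1} ≥_K x_{k+1} ≥_K x_k for all k ≥ 0; (ii) both (x_k) and (y_k) converge to A⁻¹ b, and y_k ≥_K y_{k+1} ≥_K A⁻¹b ≥_K x_{k+1} ≥_K x_k for all k ≥ 0. -/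
open Matrix Finset Filter

open Topology

namespace Stmt17Aux

variable {n : ℕ} {K : Set (Fin n → ℝ)}


lemma zero_mem (hK : IsProperCone K) : (0 : Fin n → ℝ) ∈ K := by
  have h : (0 : Fin n → ℝ) ∈ K ∩ (-K) := by rw [hK.2.2.2.1]; rfl
  exact h.1

lemma add_mem (hK : IsProperCone K) {a b : Fin n → ℝ} (ha : a ∈ K) (hb : b ∈ K) :
    a + b ∈ K := by
  have h := hK.2.1 ha hb (by norm_num : (0:ℝ) ≤ 1/2) (by norm_num : (0:ℝ) ≤ 1/2) (by norm_num)
  have h2 := hK.2.2.1 2 (by norm_num) _ h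
  have h3 : (2:ℝ) • ((1/2:ℝ) • a + (1/2:ℝ) • b) = a + b := by
    rw [smul_add, smul_smul, smul_smul]; norm_num
  rwa [h3] at h2

lemma eq_zero (hK : IsProperCone K) {a : Fin n → ℝ} (ha : a ∈ K) (hb : -a ∈ K) : a = 0 := by
  have h : a ∈ K ∩ (-K) := ⟨ha, Set.mem_neg.2 hb⟩
  rw [hK.2.2.2.1] at h
  exact h

lemma sum_mem (hK : IsProperCone K) {ι : Type*} {t : Finset ι} {f : ι → Fin n → ℝ}
    (h : ∀ i ∈ t, f i ∈ K) : ∑ i ∈ t, f i ∈ K :=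
  Finset.sum_induction f (· ∈ K) (fun _ _ => add_mem hK) (zero_mem hK) h

/-- Normality of a proper cone in finite dimensions. -/
lemma normal (hK : IsProperCone K) :
    ∃ γ : ℝ, 0 < γ ∧ ∀ a b : Fin n → ℝ, a ∈ K → b - a ∈ K → ‖a‖ ≤ γ * ‖b‖ := by
  by_contra hcon
  push_neg at hcon
  have h' : ∀ m : ℕ, ∃ a b : Fin n → ℝ, a ∈ K ∧ b - a ∈ K ∧ ((m:ℝ)+1) * ‖b‖ < ‖a‖ := by
    intro m
    obtain ⟨a, b, ha, hb, hlt⟩ := hcon ((m:ℝ)+1) (by positivity)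
    exact ⟨a, b, ha, hb, hlt⟩
  choose a b hmem hsub hlt using h'
  have hapos : ∀ m, 0 < ‖a m‖ := by
    intro m
    rcases (norm_nonneg (a m)).lt_or_eq with h | h
    · exact h
    · exfalso
      have h1 : ((m:ℝ)+1) * ‖b m‖ ≥ 0 := by positivity
      linarith [hlt m]
  set c : ℕ → Fin n → ℝ := fun m => ‖a m‖⁻¹ • a m with hc
  set d : ℕ → Fin n → ℝ := fun m => ‖a m‖⁻¹ • b m with hd
  have hcK : ∀ m, c m ∈ K := fun m => hK.2.2.1 _ (by positivity) _ (hmem m)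
  have hcn : ∀ m, ‖c m‖ = 1 := by
    intro m
    rw [hc]
    simp only [norm_smul, norm_inv, norm_norm]
    rw [inv_mul_cancel₀ (hapos m).ne']
  have hdcK : ∀ m, d m - c m ∈ K := by
    intro m
    have h1 : d m - c m = ‖a m‖⁻¹ • (b m - a m) := by rw [hc, hd, smul_sub]
    rw [h1]
    exact hK.2.2.1 _ (by positivity) _ (hsub m)
  have hdn : ∀ m, ‖d m‖ ≤ 1 / ((m:ℝ)+1) := by
    intro m
    have h2 := hapos m
    have h3 : (0:ℝ) < (m:ℝ)+1 := by positivity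
    have h4 : ‖d m‖ = ‖b m‖ / ‖a m‖ := by
      rw [hd]; simp only [norm_smul, norm_inv, norm_norm]
      rw [div_eq_mul_inv, mul_comm]
    rw [h4, div_le_div_iff₀ h2 h3]
    nlinarith [hlt m, norm_nonneg (b m)]
  have hd0 : Tendsto d atTop (𝓝 0) := by
    rw [tendsto_zero_iff_norm_tendsto_zero]
    apply squeeze_zero (fun m => norm_nonneg _) hdn
    exact tendsto_one_div_add_atTop_nhds_zero_nat
  -- compactness
  have hScomp : IsCompact (K ∩ Metric.sphere (0 : Fin n → ℝ) 1) :=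
    (isCompact_sphere 0 1).inter_left hK.1
  have hcS : ∀ m, c m ∈ K ∩ Metric.sphere (0 : Fin n → ℝ) 1 := by
    intro m
    exact ⟨hcK m, by rw [mem_sphere_zero_iff_norm]; exact hcn m⟩
  obtain ⟨c₀, hc₀S, φ, hφ, hcc⟩ := hScomp.tendsto_subseq hcS
  have hnegc : -c₀ ∈ K := by
    have ht : Tendsto (fun j => d (φ j) - c (φ j)) atTop (𝓝 (-c₀)) := by
      have := (hd0.comp hφ.tendsto_atTop).sub hcc
      rw [zero_sub] at this
      exact this
    apply hK.1.mem_of_tendsto ht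
    filter_upwards with j using hdcK (φ j)
  have hc0 : c₀ = 0 := eq_zero hK hc₀S.1 (by simpa using hnegc)
  have : (1:ℝ) = 0 := by
    have := mem_sphere_zero_iff_norm.1 hc₀S.2
    rw [hc0, norm_zero] at this
    linarith
  norm_num at this

/-- Monotone bounded sequences in a proper cone order converge. -/
lemma mono_conv (hK : IsProperCone K) {z : ℕ → Fin n → ℝ} {w : Fin n → ℝ}
    (hmono : ∀ k, z (k + 1) - z k ∈ K) (hbd : ∀ k, w - z k ∈ K) :
    ∃ L, Tendsto z atTop (𝓝 L) := by
  obtain ⟨γ, hγ, hnorm⟩ := normal hK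
  have hchain : ∀ k m, k ≤ m → z m - z k ∈ K := by
    intro k m hkm
    induction m, hkm using Nat.le_induction with
    | base => simpa using zero_mem hK
    | succ m hm ih =>
      have h1 : z (m+1) - z k = (z (m+1) - z m) + (z m - z k) := by abel
      rw [h1]; exact add_mem hK (hmono m) ih
  have hbound : ∀ k, ‖z k - z 0‖ ≤ γ * ‖w - z 0‖ := by
    intro k
    apply hnorm _ _ (hchain 0 k (Nat.zero_le k))
    have : (w - z 0) - (z k - z 0) = w - z k := by abel
    rw [this]; exact hbd k
  have hmemB : ∀ k, z k ∈ Metric.closedBall (z 0) (γ * ‖w - z 0‖) := by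
    intro k
    rw [Metric.mem_closedBall, dist_eq_norm]
    exact hbound k
  obtain ⟨L, _, φ, hφ, hzφ⟩ := (isCompact_closedBall (z 0) (γ * ‖w - z 0‖)).tendsto_subseq hmemB
  refine ⟨L, ?_⟩
  have hLk : ∀ k, L - z k ∈ K := by
    intro k
    apply hK.1.mem_of_tendsto (hzφ.sub_const (z k))
    filter_upwards [eventually_ge_atTop k] with j hj
    exact hchain k (φ j) (hj.trans (hφ.le_apply))
  rw [Metric.tendsto_atTop]
  intro ε hε
  have hε' : 0 < ε / (γ + 1) := by positivity
  rw [Metric.tendsto_atTop] at hzφ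
  obtain ⟨j₀, hj₀⟩ := hzφ (ε / (γ + 1)) hε'
  refine ⟨φ j₀, fun k hk => ?_⟩
  have h1 : z k - z (φ j₀) ∈ K := hchain _ _ hk
  have h2 : (L - z (φ j₀)) - (z k - z (φ j₀)) ∈ K := by
    have h3 : (L - z (φ j₀)) - (z k - z (φ j₀)) = L - z k := by abel
    rw [h3]; exact hLk k
  have h3 : ‖z k - z (φ j₀)‖ ≤ γ * ‖L - z (φ j₀)‖ := hnorm _ _ h1 h2
  have h4 : dist (z (φ j₀)) L < ε / (γ + 1) := hj₀ j₀ le_rfl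
  have h5 : dist (z k) L ≤ dist (z k) (z (φ j₀)) + dist (z (φ j₀)) L := dist_triangle _ _ _
  have h6 : dist (z k) (z (φ j₀)) ≤ γ * dist (z (φ j₀)) L := by
    rw [dist_eq_norm, dist_eq_norm] at *
    calc ‖z k - z (φ j₀)‖ ≤ γ * ‖L - z (φ j₀)‖ := h3
      _ = γ * ‖z (φ j₀) - L‖ := by rw [norm_sub_rev]
  have h7 : (γ + 1) * (ε / (γ + 1)) = ε := by field_simp
  calc dist (z k) L ≤ γ * dist (z (φ j₀)) L + dist (z (φ j₀)) L := by linarith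
    _ = (γ + 1) * dist (z (φ j₀)) L := by ring
    _ < (γ + 1) * (ε / (γ + 1)) := by
        apply mul_lt_mul_of_pos_left h4 (by linarith)
    _ = ε := h7



variable {A U V F G : Matrix (Fin n) (Fin n) ℝ} {s : ℕ}

lemma Fpow (hF : IsUnit F) (j : ℕ) : F * (F⁻¹ * G) ^ j = (G * F⁻¹) ^ j * F := by
  have hFd : IsUnit F.det := (Matrix.isUnit_iff_isUnit_det F).1 hF
  induction j with
  | zero => simp
  | succ j ih =>
    rw [pow_succ, ← mul_assoc, ih, pow_succ]
    rw [mul_assoc, mul_assoc, ← mul_assoc F, Matrix.mul_nonsing_inv F hFd, one_mul,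
      mul_assoc, Matrix.nonsing_inv_mul F hFd, mul_one]

lemma FQ (hF : IsUnit F) :
    F * twoStageQ F G s = ∑ j ∈ Finset.range s, (G * F⁻¹) ^ j := by
  have hFd : IsUnit F.det := (Matrix.isUnit_iff_isUnit_det F).1 hF
  rw [twoStageQ, ← mul_assoc, Finset.mul_sum, Finset.sum_mul]
  have h : ∀ j, F * (F⁻¹ * G) ^ j * F⁻¹ = (G * F⁻¹) ^ j := by
    intro j
    rw [Fpow hF, mul_assoc, Matrix.mul_nonsing_inv F hFd, mul_one]
  exact Finset.sum_congr rfl fun j _ => h j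

lemma Qval (hU : IsUnit U) (hF : IsUnit F) (hUFG : U = F - G) :
    twoStageQ F G s = U⁻¹ * (1 - (G * F⁻¹) ^ s) := by
  have hUd : IsUnit U.det := (Matrix.isUnit_iff_isUnit_det U).1 hU
  have hFd : IsUnit F.det := (Matrix.isUnit_iff_isUnit_det F).1 hF
  have key : U * twoStageQ F G s = 1 - (G * F⁻¹) ^ s := by
    have hGQ : G * twoStageQ F G s = (G * F⁻¹) * (F * twoStageQ F G s) := by
      rw [mul_assoc, ← mul_assoc F⁻¹, Matrix.nonsing_inv_mul F hFd, one_mul]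
    rw [hUFG, sub_mul, hGQ, FQ hF]
    have := mul_geom_sum (G * F⁻¹) s
    -- (G*F⁻¹ - 1) * ∑ = (G*F⁻¹)^s - 1
    have h2 : (1 - G * F⁻¹) * ∑ j ∈ Finset.range s, (G * F⁻¹) ^ j
        = 1 - (G * F⁻¹) ^ s := by
      have h3 : (1 - G * F⁻¹) = -((G * F⁻¹) - 1) := by noncomm_ring
      rw [h3, neg_mul, this]; noncomm_ring
    rw [← h2]; noncomm_ring
  calc twoStageQ F G s = U⁻¹ * (U * twoStageQ F G s) := by
        rw [← mul_assoc, Matrix.nonsing_inv_mul U hUd, one_mul]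
    _ = U⁻¹ * (1 - (G * F⁻¹) ^ s) := by rw [key]

lemma TQA (hF : IsUnit F) :
    twoStageT F G V s = 1 - twoStageQ F G s * (F - G - V) := by
  have hFd : IsUnit F.det := (Matrix.isUnit_iff_isUnit_det F).1 hF
  have hQU : twoStageQ F G s * (F - G) = 1 - (F⁻¹ * G) ^ s := by
    rw [twoStageQ, mul_assoc, mul_sub, Matrix.nonsing_inv_mul F hFd]
    rw [mul_sub, mul_one]
    have := geom_sum_mul (F⁻¹ * G) s
    have h2 : (∑ j ∈ Finset.range s, (F⁻¹ * G) ^ j) * (1 - F⁻¹ * G)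
        = 1 - (F⁻¹ * G) ^ s := by
      have h3 : (1 - F⁻¹ * G) = -((F⁻¹ * G) - 1) := by noncomm_ring
      rw [h3, mul_neg, this]; noncomm_ring
    rw [← h2]; noncomm_ring
  have hQV : twoStageQ F G s * V = (∑ j ∈ Finset.range s, (F⁻¹ * G) ^ j) * (F⁻¹ * V) := by
    rw [twoStageQ, mul_assoc]
  rw [twoStageT, mul_sub, hQU, hQV]
  noncomm_ring

lemma Tval (hU : IsUnit U) (hF : IsUnit F) (hAUV : A = U - V) (hUFG : U = F - G) :
    twoStageT F G V s = U⁻¹ * V + U⁻¹ * ((G * F⁻¹) ^ s * A) := by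
  have hUd : IsUnit U.det := (Matrix.isUnit_iff_isUnit_det U).1 hU
  have h1 : F - G - V = A := by rw [hAUV, hUFG]
  rw [TQA hF, h1, Qval hU hF hUFG]
  have h2 : (1 : Matrix (Fin n) (Fin n) ℝ) = U⁻¹ * U := (Matrix.nonsing_inv_mul U hUd).symm
  calc 1 - U⁻¹ * (1 - (G * F⁻¹) ^ s) * A
      = U⁻¹ * U - U⁻¹ * A + U⁻¹ * ((G * F⁻¹) ^ s * A) := by rw [← h2]; noncomm_ring
    _ = U⁻¹ * (U - A) + U⁻¹ * ((G * F⁻¹) ^ s * A) := by rw [mul_sub]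
    _ = _ := by rw [hAUV]; noncomm_ring

lemma sum_mulVec {n : ℕ} {ι : Type*} (t : Finset ι) (M : ι → Matrix (Fin n) (Fin n) ℝ)
    (v : Fin n → ℝ) : (∑ i ∈ t, M i).mulVec v = ∑ i ∈ t, (M i).mulVec v := by
  induction t using Finset.cons_induction with
  | empty => simp
  | cons i t hi ih => simp [Finset.sum_cons, Matrix.add_mulVec, ih]

variable {M N : Matrix (Fin n) (Fin n) ℝ}

lemma nonneg_mul (hM : KNonneg K M) (hN : KNonneg K N) : KNonneg K (M * N) := by
  intro x hx
  rw [← Matrix.mulVec_mulVec]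
  exact hM _ (hN x hx)

lemma nonneg_add (hK : IsProperCone K) (hM : KNonneg K M) (hN : KNonneg K N) :
    KNonneg K (M + N) := by
  intro x hx
  rw [Matrix.add_mulVec]
  exact add_mem hK (hM x hx) (hN x hx)

lemma nonneg_pow (hM : KNonneg K M) (j : ℕ) : KNonneg K (M ^ j) := by
  induction j with
  | zero => intro x hx; rw [pow_zero, Matrix.one_mulVec]; exact hx
  | succ j ih => rw [pow_succ]; exact nonneg_mul ih hM

lemma killer {A F G : Matrix (Fin n) (Fin n) ℝ} {s : ℕ}
    (hK : IsProperCone K) (hAnonneg : KNonneg K A) (hA : IsUnit A) (hF : IsUnit F)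
    (hGF : KNonneg K (G * F⁻¹)) (hs : 1 ≤ s) {d : Fin n → ℝ} (hd : d ∈ K)
    (hQAd : (twoStageQ F G s * A).mulVec d = 0) : d = 0 := by
  have hAd : IsUnit A.det := (Matrix.isUnit_iff_isUnit_det A).1 hA
  set e := A.mulVec d with he'
  have he : e ∈ K := hAnonneg d hd
  have hQe : (twoStageQ F G s).mulVec e = 0 := by
    rw [he', Matrix.mulVec_mulVec]; exact hQAd
  have hFQe : ∑ j ∈ Finset.range s, ((G * F⁻¹) ^ j).mulVec e = 0 := by
    rw [← sum_mulVec, ← FQ hF, ← Matrix.mulVec_mulVec, hQe, Matrix.mulVec_zero]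
  have h0 : (0:ℕ) ∈ Finset.range s := Finset.mem_range.2 hs
  have hsplit := Finset.add_sum_erase (Finset.range s)
    (fun j => ((G * F⁻¹) ^ j).mulVec e) h0
  have he0 : ((G * F⁻¹) ^ (0:ℕ)).mulVec e = e := by rw [pow_zero, Matrix.one_mulVec]
  have hrest : ∑ j ∈ (Finset.range s).erase 0, ((G * F⁻¹) ^ j).mulVec e ∈ K :=
    sum_mem hK fun j hj => nonneg_pow hGF j e he
  have hnege : -e ∈ K := by
    have h2 : e + ∑ j ∈ (Finset.range s).erase 0, ((G * F⁻¹) ^ j).mulVec e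
        = ∑ j ∈ Finset.range s, ((G * F⁻¹) ^ j).mulVec e := by
      simpa using hsplit
    rw [hFQe] at h2
    have h3 : ∑ j ∈ (Finset.range s).erase 0, ((G * F⁻¹) ^ j).mulVec e = -e :=
      eq_neg_of_add_eq_zero_right h2
    rw [← h3]; exact hrest
  have hez : e = 0 := eq_zero hK he hnege
  have hd2 : d = A⁻¹.mulVec e := by
    rw [he', Matrix.mulVec_mulVec, Matrix.nonsing_inv_mul A hAd, Matrix.one_mulVec]
  rw [hd2, hez, Matrix.mulVec_zero]

end Stmt17Aux

theorem stmt_17 {n : ℕ} (K : Set (Fin n → ℝ)) (hK : IsProperCone K)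
    (A U V F G : Matrix (Fin n) (Fin n) ℝ)
    (hAnonneg : KNonneg K A) (hmono : KMonotone K A)
    (houter : KRegularSplitting K A U V)
    (hinner : KWeakRegularSplittingII K U F G)
    (hcomm : V * F⁻¹ * G = G * F⁻¹ * V)
    (s : ℕ) (hs : 1 ≤ s) (b : Fin n → ℝ)
    (x y : ℕ → Fin n → ℝ)
    (hx : ∀ k, x (k + 1) = (twoStageT F G V s).mulVec (x k) + (twoStageQ F G s).mulVec b)
    (hy : ∀ k, y (k + 1) = (twoStageT F G V s).mulVec (y k) + (twoStageQ F G s).mulVec b)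
    (h₁ : x 1 - x 0 ∈ K) (h₂ : y 0 - y 1 ∈ K)
    (h₃ : y 0 - A⁻¹.mulVec b ∈ K) (h₄ : A⁻¹.mulVec b - x 0 ∈ K) :
    (∀ k, y k - y (k + 1) ∈ K ∧ y (k + 1) - x (k + 1) ∈ K ∧ x (k + 1) - x k ∈ K) ∧
    Filter.Tendsto x Filter.atTop (nhds (A⁻¹.mulVec b)) ∧
    Filter.Tendsto y Filter.atTop (nhds (A⁻¹.mulVec b)) ∧
    (∀ k, y (k + 1) - A⁻¹.mulVec b ∈ K ∧ A⁻¹.mulVec b - x (k + 1) ∈ K) := by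
  obtain ⟨hAUV, hUu, hUinv, hVnn⟩ := houter
  obtain ⟨hUFG, hFu, hFinv, hGFnn⟩ := hinner
  obtain ⟨hAu, hAinv⟩ := hmono
  have hAd : IsUnit A.det := (Matrix.isUnit_iff_isUnit_det A).1 hAu
  set T := twoStageT F G V s with hTdef
  set Q := twoStageQ F G s with hQdef
  set z := A⁻¹.mulVec b with hzdef
  -- T is K-nonnegative
  have hTnn : KNonneg K T := by
    rw [hTdef, Stmt17Aux.Tval hUu hFu hAUV hUFG]
    exact Stmt17Aux.nonneg_add hK (Stmt17Aux.nonneg_mul hUinv hVnn)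
      (Stmt17Aux.nonneg_mul hUinv
        (Stmt17Aux.nonneg_mul (Stmt17Aux.nonneg_pow hGFnn s) hAnonneg))
  have hFGV : F - G - V = A := by rw [hAUV, hUFG]
  have hTA : T = 1 - Q * A := by
    rw [hTdef, hQdef, Stmt17Aux.TQA hFu, hFGV]
  -- fixed point equation
  have hAAinv : A.mulVec z = b := by
    rw [hzdef, Matrix.mulVec_mulVec, Matrix.mul_nonsing_inv A hAd, Matrix.one_mulVec]
  have hfix : z = T.mulVec z + Q.mulVec b := by
    rw [hTA, Matrix.sub_mulVec, Matrix.one_mulVec]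
    have h1 : (Q * A).mulVec z = Q.mulVec b := by
      rw [← Matrix.mulVec_mulVec, hAAinv]
    rw [h1]; abel
  -- the step identity
  have hstep : ∀ u v : Fin n → ℝ,
      (T.mulVec u + Q.mulVec b) - (T.mulVec v + Q.mulVec b) = T.mulVec (u - v) := by
    intro u v
    rw [Matrix.mulVec_sub]; abel
  -- monotonicity of x
  have hxd : ∀ k, x (k + 1) - x k ∈ K := by
    intro k
    induction k with
    | zero => exact h₁
    | succ k ih =>
      have h5 := hstep (x (k + 1)) (x k)
      rw [← hx (k + 1), ← hx k] at h5
      rw [h5]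
      exact hTnn _ ih
  -- monotonicity of y
  have hyd : ∀ k, y k - y (k + 1) ∈ K := by
    intro k
    induction k with
    | zero => exact h₂
    | succ k ih =>
      have h5 := hstep (y k) (y (k + 1))
      rw [← hy k, ← hy (k + 1)] at h5
      rw [h5]
      exact hTnn _ ih
  -- x is bounded above by z
  have hzx : ∀ k, z - x k ∈ K := by
    intro k
    induction k with
    | zero => exact h₄
    | succ k ih =>
      have h5 := hstep z (x k)
      rw [← hfix, ← hx k] at h5
      rw [h5]
      exact hTnn _ ih
  -- y is bounded below by z
  have hyz : ∀ k, y k - z ∈ K := by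
    intro k
    induction k with
    | zero => exact h₃
    | succ k ih =>
      have h5 := hstep (y k) z
      rw [← hy k, ← hfix] at h5
      rw [h5]
      exact hTnn _ ih
  have hyx : ∀ k, y (k + 1) - x (k + 1) ∈ K := by
    intro k
    have h5 := Stmt17Aux.add_mem hK (hyz (k + 1)) (hzx (k + 1))
    rw [sub_add_sub_cancel] at h5
    exact h5
  -- continuity of the affine iteration map
  have hcontT : Continuous fun v : Fin n → ℝ => T.mulVec v := by
    have h5 : Continuous (Matrix.mulVecLin T) := LinearMap.continuous_of_finiteDimensional _
    exact h5
  -- limits satisfy the fixed point equation and are killed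
  have limfix : ∀ (w : ℕ → Fin n → ℝ), (∀ k, w (k + 1) = T.mulVec (w k) + Q.mulVec b) →
      ∀ L : Fin n → ℝ, Tendsto w atTop (𝓝 L) → L = T.mulVec L + Q.mulVec b := by
    intro w hw L hL
    have h6 : Tendsto (fun k => w (k + 1)) atTop (𝓝 L) := hL.comp (tendsto_add_atTop_nat 1)
    have h5 : Tendsto (fun k => T.mulVec (w k) + Q.mulVec b) atTop
        (𝓝 (T.mulVec L + Q.mulVec b)) :=
      ((hcontT.tendsto L).comp hL).add tendsto_const_nhds
    have h7 : Tendsto (fun k => w (k + 1)) atTop (𝓝 (T.mulVec L + Q.mulVec b)) :=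
      h5.congr fun k => (hw k).symm
    exact tendsto_nhds_unique h6 h7
  have kill : ∀ d : Fin n → ℝ, d ∈ K → T.mulVec d = d → d = 0 := by
    intro d hd hTd
    apply Stmt17Aux.killer hK hAnonneg hAu hFu hGFnn hs hd
    have h8 : (1 - Q * A).mulVec d = d := by rw [← hTA]; exact hTd
    rw [Matrix.sub_mulVec, Matrix.one_mulVec] at h8
    exact sub_eq_self.mp h8
  -- convergence of x
  obtain ⟨L, hL⟩ := Stmt17Aux.mono_conv hK hxd hzx
  have hLfix : L = T.mulVec L + Q.mulVec b := limfix x hx L hL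
  have hdK : z - L ∈ K :=
    hK.1.mem_of_tendsto (tendsto_const_nhds.sub hL) (Eventually.of_forall hzx)
  have hTd : T.mulVec (z - L) = z - L := by
    rw [Matrix.mulVec_sub]
    conv_rhs => rw [hfix, hLfix]
    abel
  have hLz : L = z := by
    have h9 := kill _ hdK hTd
    have := sub_eq_zero.mp h9
    exact this.symm
  have hxconv : Tendsto x atTop (𝓝 z) := hLz ▸ hL
  -- convergence of y
  have hyd' : ∀ k, (fun k => -y k) (k + 1) - (fun k => -y k) k ∈ K := by
    intro k
    show -y (k + 1) - -y k ∈ K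
    rw [neg_sub_neg]
    exact hyd k
  have hybd' : ∀ k, -z - (fun k => -y k) k ∈ K := by
    intro k
    show -z - -y k ∈ K
    rw [neg_sub_neg]
    exact hyz k
  obtain ⟨M', hM'⟩ := Stmt17Aux.mono_conv hK hyd' hybd'
  have hMy : Tendsto y atTop (𝓝 (-M')) := by
    have h5 := hM'.neg
    simpa using h5
  have hMfix : -M' = T.mulVec (-M') + Q.mulVec b := limfix y hy (-M') hMy
  have hd'K : (-M') - z ∈ K :=
    hK.1.mem_of_tendsto (hMy.sub_const z) (Eventually.of_forall hyz)
  have hTd' : T.mulVec ((-M') - z) = (-M') - z := by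
    rw [Matrix.mulVec_sub]
    conv_rhs => rw [hfix, hMfix]
    abel
  have hMz : -M' = z := by
    have h9 := kill _ hd'K hTd'
    exact sub_eq_zero.mp h9
  have hyconv : Tendsto y atTop (𝓝 z) := hMz ▸ hMy
  exact ⟨fun k => ⟨hyd k, hyx k, hxd k⟩, hxconv, hyconv,
    fun k => ⟨hyz (k + 1), hzx (k + 1)⟩⟩
end
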